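/- Let G be a finite group, μ : G → {±1} a surjective group homomorphism, K = ker μ, and g ∈ G \ K. Write Irr(G) and Irr(K) for the sets of isomorphism classes of irreducible finite-dimensional complex representations. Then: (1) the number of classes [τ] ∈ Irr(G) with μ⊗τ ≅ τ equals the number of unordered pairs {[σ], [g·σ]} ⊆ Irr(K) with g·σ ≇ σ; and (2) the number of unordered pairs {[τ], [μ⊗τ]} ⊆ Irr(G) with μ⊗τ ≇ τ equals the number of classes [σ] ∈ Irr(K) with g·σ ≅ σ. In other words, restriction induces a bijection between the orbit space of Irr(G) under the involution τ ↦ μ⊗τ and the orbit space of Irr(K) under conjugation by G, exchanging orbits of length one and orbits of length two. -/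

import Mathlib

noncomputable section

/-- A representation is irreducible if the space is nonzero and the only invariant subspaces
are `⊥` and `⊤`. -/
def IsIrreducibleRep {G V : Type*} [Group G] [AddCommGroup V] [Module ℂ V]
    (ρ : Representation ℂ G V) : Prop :=
  Nontrivial V ∧
    ∀ p : Submodule ℂ V, (∀ g : G, ∀ v ∈ p, ρ g v ∈ p) → p = ⊥ ∨ p = ⊤

/-- Two representations are isomorphic (equivalent) if there is an equivariant linear
isomorphism between their underlying spaces. -/
def RepIso {G V W : Type*} [Group G] [AddCommGroup V] [Module ℂ V]
    [AddCommGroup W] [Module ℂ W]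
    (ρ : Representation ℂ G V) (σ : Representation ℂ G W) : Prop :=
  ∃ e : V ≃ₗ[ℂ] W, ∀ (g : G) (v : V), e (ρ g v) = σ g (e v)

/-- The conjugate representation `g·σ` of a representation `σ` of a normal subgroup `K`,
given by `(g·σ)(k) = σ(g⁻¹ k g)`. -/
def conjRep {G : Type*} [Group G] {K : Subgroup G} [K.Normal] (g : G)
    {V : Type*} [AddCommGroup V] [Module ℂ V] (σ : Representation ℂ K V) :
    Representation ℂ K V :=
  σ.comp (MulAut.conjNormal g⁻¹).toMonoidHom

/-- The twist `μ ⊗ τ` of a representation `τ` by a character `μ : G →* ℂˣ`, given by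
`(μ⊗τ)(x) = μ(x)·τ(x)`. -/
def twistRep {G V : Type*} [Group G] [AddCommGroup V] [Module ℂ V]
    (μ : G →* ℂˣ) (τ : Representation ℂ G V) : Representation ℂ G V where
  toFun g := (μ g : ℂ) • τ g
  map_one' := by simp
  map_mul' g h := by
    ext v
    simp [Module.End.mul_apply, smul_smul, mul_comm]

/-- A bundled finite-dimensional complex representation of `H` (on some `ℂ^d`); every
finite-dimensional complex representation of `H` is isomorphic to one of these. -/
def FinRep (H : Type*) [Group H] : Type _ := Σ d : ℕ, Representation ℂ H (Fin d → ℂ)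

/-- Isomorphism of representations as a setoid on bundled finite-dimensional
representations; its quotient is the set of isomorphism classes. -/
def repSetoid (H : Type*) [Group H] : Setoid (FinRep H) where
  r p q := RepIso p.2 q.2
  iseqv := by
    refine ⟨fun p => ⟨LinearEquiv.refl ℂ _, fun g v => rfl⟩, ?_, ?_⟩
    · rintro p q ⟨e, he⟩
      refine ⟨e.symm, fun g w => e.injective ?_⟩
      rw [e.apply_symm_apply, he, e.apply_symm_apply]
    · rintro p q r ⟨e, he⟩ ⟨f, hf⟩
      exact ⟨e.trans f, fun g v => by
        simp only [LinearEquiv.trans_apply, he, hf]⟩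


namespace Stmt5

open Module LinearMap

section Generic

variable {H : Type*} [Group H] {V W U : Type*} [AddCommGroup V] [Module ℂ V]
  [AddCommGroup W] [Module ℂ W] [AddCommGroup U] [Module ℂ U]

theorem repIso_refl (ρ : Representation ℂ H V) : RepIso ρ ρ :=
  ⟨LinearEquiv.refl ℂ V, fun _ _ => rfl⟩

theorem repIso_symm {ρ : Representation ℂ H V} {σ : Representation ℂ H W}
    (h : RepIso ρ σ) : RepIso σ ρ := by
  obtain ⟨e, he⟩ := h
  refine ⟨e.symm, fun x w => e.injective ?_⟩
  rw [e.apply_symm_apply, he, e.apply_symm_apply]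

theorem repIso_trans {ρ : Representation ℂ H V} {σ : Representation ℂ H W}
    {π : Representation ℂ H U} (h1 : RepIso ρ σ) (h2 : RepIso σ π) : RepIso ρ π := by
  obtain ⟨e, he⟩ := h1
  obtain ⟨f, hf⟩ := h2
  exact ⟨e.trans f, fun x v => by simp only [LinearEquiv.trans_apply, he, hf]⟩

theorem rep_mul (ρ : Representation ℂ H V) (x y : H) (v : V) :
    ρ x (ρ y v) = ρ (x * y) v := by
  rw [map_mul]; rfl

theorem repIso_irr {ρ : Representation ℂ H V} {σ : Representation ℂ H W}
    (h : RepIso ρ σ) (hi : IsIrreducibleRep ρ) : IsIrreducibleRep σ := by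
  obtain ⟨e, he⟩ := h
  haveI : Nontrivial V := hi.1
  refine ⟨(e.symm.toEquiv).nontrivial, fun p hp => ?_⟩
  have hcomap : ∀ x : H, ∀ v ∈ p.comap e.toLinearMap, ρ x v ∈ p.comap e.toLinearMap := by
    intro x v hv
    simp only [Submodule.mem_comap, LinearEquiv.coe_coe] at hv ⊢
    rw [he]
    exact hp x _ hv
  have hmc : Submodule.map e.toLinearMap (p.comap e.toLinearMap) = p :=
    Submodule.map_comap_eq_of_surjective e.surjective p
  rcases hi.2 _ hcomap with h0 | h1
  · left; rw [← hmc, h0, Submodule.map_bot]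
  · right; rw [← hmc, h1, Submodule.map_top, LinearMap.range_eq_top]
    exact e.surjective

/-- Schur's lemma: an endomorphism commuting with an irreducible representation is scalar. -/
theorem schur {ρ : Representation ℂ H V} [FiniteDimensional ℂ V]
    (hirr : IsIrreducibleRep ρ) (T : V →ₗ[ℂ] V)
    (hT : ∀ (x : H) (v : V), T (ρ x v) = ρ x (T v)) :
    ∃ c : ℂ, ∀ v, T v = c • v := by
  haveI : Nontrivial V := hirr.1
  obtain ⟨c, hc⟩ := Module.End.exists_eigenvalue T
  refine ⟨c, ?_⟩
  have hinv : ∀ (x : H), ∀ v ∈ Module.End.eigenspace T c, ρ x v ∈ Module.End.eigenspace T c := by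
    intro x v hv
    rw [Module.End.mem_eigenspace_iff] at hv ⊢
    rw [hT, hv, map_smul]
  rcases hirr.2 _ hinv with h | h
  · exact absurd h hc
  · intro v
    have hv : v ∈ Module.End.eigenspace T c := h ▸ Submodule.mem_top
    rwa [Module.End.mem_eigenspace_iff] at hv

theorem eq_zero_of_eq_neg {M : Type*} [AddCommGroup M] [Module ℂ M] {a : M}
    (h : a = -a) : a = 0 := by
  have h2 : (2 : ℂ) • a = 0 := by
    rw [two_smul]
    nth_rewrite 1 [h]
    exact neg_add_cancel a
  rcases smul_eq_zero.mp h2 with h' | h'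
  · norm_num at h'
  · exact h'

theorem exists_sqrt (c : ℂ) : ∃ s : ℂ, s * s = c := by
  obtain ⟨z, hz⟩ := IsAlgClosed.exists_pow_nat_eq c (n := 2) (by norm_num)
  exact ⟨z, by rw [← hz]; ring⟩

theorem twistRep_apply (μ : H →* ℂˣ) (τ : Representation ℂ H V) (x : H) (v : V) :
    twistRep μ τ x v = (μ x : ℂ) • τ x v := rfl

theorem twist_congr {μ : H →* ℂˣ} {ρ : Representation ℂ H V} {σ : Representation ℂ H W}
    (h : RepIso ρ σ) : RepIso (twistRep μ ρ) (twistRep μ σ) := by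
  obtain ⟨e, he⟩ := h
  exact ⟨e, fun x v => by rw [twistRep_apply, twistRep_apply, map_smul, he]⟩

end Generic

section KerArith

variable {G : Type*} [Group G] {μ : G →* ℂˣ}

theorem mu_neg (hval : ∀ x, μ x = 1 ∨ μ x = -1) {x : G} (hx : x ∉ μ.ker) : μ x = -1 :=
  (hval x).resolve_left fun h => hx (MonoidHom.mem_ker.mpr h)

theorem mu_coe_one {x : G} (hx : x ∈ μ.ker) : (μ x : ℂ) = 1 := by
  rw [MonoidHom.mem_ker.mp hx, Units.val_one]

theorem mu_coe_neg (hval : ∀ x, μ x = 1 ∨ μ x = -1) {x : G} (hx : x ∉ μ.ker) :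
    (μ x : ℂ) = -1 := by
  rw [mu_neg hval hx]; simp

theorem mu_sq (hval : ∀ x, μ x = 1 ∨ μ x = -1) (x : G) : (μ x : ℂ) * (μ x : ℂ) = 1 := by
  rcases hval x with h | h <;> rw [h] <;> simp

theorem mul_mem_ker (hval : ∀ x, μ x = 1 ∨ μ x = -1) {x y : G}
    (hx : x ∉ μ.ker) (hy : y ∉ μ.ker) : x * y ∈ μ.ker := by
  rw [MonoidHom.mem_ker, map_mul, mu_neg hval hx, mu_neg hval hy]
  simp

theorem inv_mul_mem_ker (hval : ∀ x, μ x = 1 ∨ μ x = -1) {x y : G}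
    (hx : x ∉ μ.ker) (hy : y ∉ μ.ker) : x⁻¹ * y ∈ μ.ker := by
  rw [MonoidHom.mem_ker, map_mul, map_inv, mu_neg hval hx, mu_neg hval hy]
  simp

theorem conj_mem_ker {x : G} (hx : x ∈ μ.ker) (a : G) : a⁻¹ * x * a ∈ μ.ker := by
  rw [MonoidHom.mem_ker] at hx ⊢
  rw [map_mul, map_mul, hx, map_inv]
  simp [mul_comm]

theorem mul_not_mem_left {x y : G} (hx : x ∈ μ.ker) (hy : y ∉ μ.ker) : x * y ∉ μ.ker := by
  intro h
  have := mul_mem (inv_mem hx) h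
  rw [inv_mul_cancel_left] at this
  exact hy this

theorem mul_not_mem_right {x y : G} (hx : x ∉ μ.ker) (hy : y ∈ μ.ker) : x * y ∉ μ.ker := by
  intro h
  have := mul_mem h (inv_mem hy)
  rw [mul_inv_cancel_right] at this
  exact hx this

variable {V : Type*} [AddCommGroup V] [Module ℂ V]

theorem conjRep_apply (g : G) (σ : Representation ℂ μ.ker V) (k : μ.ker) :
    conjRep g σ k = σ ⟨g⁻¹ * ↑k * g, conj_mem_ker k.2 g⟩ := by
  show σ _ = σ _
  congr 1
  exact Subtype.ext (by simp [MulAut.conjNormal_apply])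

theorem conj_congr {g : G} {σ : Representation ℂ μ.ker V} {W : Type*} [AddCommGroup W]
    [Module ℂ W] {σ' : Representation ℂ μ.ker W} (h : RepIso σ σ') :
    RepIso (conjRep g σ) (conjRep g σ') := by
  obtain ⟨e, he⟩ := h
  exact ⟨e, fun k v => he _ v⟩

theorem conj_irr {g : G} {σ : Representation ℂ μ.ker V} (hq : IsIrreducibleRep σ) :
    IsIrreducibleRep (conjRep g σ) := by
  refine ⟨hq.1, fun p hp => hq.2 p ?_⟩
  intro k v hv
  have hmem : g * ↑k * g⁻¹ ∈ μ.ker := by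
    have := conj_mem_ker k.2 g⁻¹
    rwa [inv_inv] at this
  have := hp ⟨g * ↑k * g⁻¹, hmem⟩ v hv
  rwa [conjRep_apply, show (⟨g⁻¹ * (g * ↑k * g⁻¹) * g, conj_mem_ker hmem g⟩ : μ.ker) = k from
    Subtype.ext (by group)] at this

theorem conj_conj_iso (hval : ∀ x, μ x = 1 ∨ μ x = -1) {g : G} (hg : g ∉ μ.ker)
    (σ : Representation ℂ μ.ker V) :
    RepIso (conjRep g (conjRep g σ)) σ := by
  set g2 : μ.ker := ⟨g * g, mul_mem_ker hval hg hg⟩ with hg2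
  refine ⟨LinearEquiv.ofLinear (σ g2) (σ g2⁻¹) ?_ ?_, ?_⟩
  · ext v
    simp only [LinearMap.coe_comp, Function.comp_apply, LinearMap.id_coe, id_eq]
    rw [rep_mul, mul_inv_cancel, map_one, Module.End.one_apply]
  · ext v
    simp only [LinearMap.coe_comp, Function.comp_apply, LinearMap.id_coe, id_eq]
    rw [rep_mul, inv_mul_cancel, map_one, Module.End.one_apply]
  · intro k v
    show σ g2 ((conjRep g (conjRep g σ)) k v) = σ k (σ g2 v)
    rw [conjRep_apply, conjRep_apply, rep_mul, rep_mul]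
    exact congrArg (fun z : ↥μ.ker => σ z v) (Subtype.ext (by rw [hg2]; push_cast; group))

end KerArith


section Ind

variable {G : Type*} [Group G] {μ : G →* ℂˣ}
variable {V W : Type*} [AddCommGroup V] [Module ℂ V] [AddCommGroup W] [Module ℂ W]

theorem q_congr (q : Representation ℂ μ.ker V) {a b : μ.ker} (h : (a : G) = (b : G)) (v : V) :
    q a v = q b v := by rw [Subtype.ext h]

theorem q_mul (q : Representation ℂ μ.ker V) {a b : G} (ha : a ∈ μ.ker) (hb : b ∈ μ.ker)
    (v : V) : q ⟨a, ha⟩ (q ⟨b, hb⟩ v) = q ⟨a * b, mul_mem ha hb⟩ v := by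
  rw [rep_mul]; rfl

variable (hval : ∀ x, μ x = 1 ∨ μ x = -1) {g : G} (hg : g ∉ μ.ker)

/-- The representation of `G` induced from a representation `q` of the index-two
subgroup `ker μ`, modeled on `V × V`. -/
def IndRep (q : Representation ℂ μ.ker V) : Representation ℂ G (V × V) where
  toFun x :=
    if h : x ∈ μ.ker then
      (q ⟨x, h⟩).prodMap (q ⟨g⁻¹ * x * g, conj_mem_ker h g⟩)
    else
      ((q ⟨x * g, mul_mem_ker hval h hg⟩).prodMap
        (q ⟨g⁻¹ * x, inv_mul_mem_ker hval hg h⟩)).comp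
        (LinearMap.prod (LinearMap.snd ℂ V V) (LinearMap.fst ℂ V V))
  map_one' := by
    rw [dif_pos (one_mem _)]
    refine LinearMap.ext fun u => Prod.ext ?_ ?_
    · show q ⟨1, one_mem _⟩ u.1 = u.1
      show q 1 u.1 = u.1
      rw [map_one]; rfl
    · show q ⟨g⁻¹ * 1 * g, _⟩ u.2 = u.2
      rw [q_congr q (show ((⟨g⁻¹ * 1 * g, conj_mem_ker (one_mem _) g⟩ : μ.ker) : G)
        = ((1 : μ.ker) : G) from by push_cast; group) u.2, map_one]
      rfl
  map_mul' x y := by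
    by_cases hx : x ∈ μ.ker <;> by_cases hy : y ∈ μ.ker
    · rw [dif_pos (mul_mem hx hy), dif_pos hx, dif_pos hy]
      refine LinearMap.ext fun u => Prod.ext ?_ ?_ <;>
        simp only [Module.End.mul_apply, LinearMap.prodMap_apply] <;>
        rw [q_mul] <;> exact q_congr q (by group) _
    · rw [dif_neg (mul_not_mem_left hx hy), dif_pos hx, dif_neg hy]
      refine LinearMap.ext fun u => Prod.ext ?_ ?_ <;>
        simp only [Module.End.mul_apply, LinearMap.prodMap_apply, LinearMap.comp_apply,
          LinearMap.prod_apply, Function.prod_apply, LinearMap.fst_apply, LinearMap.snd_apply] <;>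
        rw [q_mul] <;> exact q_congr q (by group) _
    · rw [dif_neg (mul_not_mem_right hx hy), dif_neg hx, dif_pos hy]
      refine LinearMap.ext fun u => Prod.ext ?_ ?_ <;>
        simp only [Module.End.mul_apply, LinearMap.prodMap_apply, LinearMap.comp_apply,
          LinearMap.prod_apply, Function.prod_apply, LinearMap.fst_apply, LinearMap.snd_apply] <;>
        rw [q_mul] <;> exact q_congr q (by group) _
    · rw [dif_pos (mul_mem_ker hval hx hy), dif_neg hx, dif_neg hy]
      refine LinearMap.ext fun u => Prod.ext ?_ ?_ <;>
        simp only [Module.End.mul_apply, LinearMap.prodMap_apply, LinearMap.comp_apply,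
          LinearMap.prod_apply, Function.prod_apply, LinearMap.fst_apply, LinearMap.snd_apply] <;>
        rw [q_mul] <;> exact q_congr q (by group) _

theorem IndRep_apply_mem (q : Representation ℂ μ.ker V) {x : G} (h : x ∈ μ.ker) (u : V × V) :
    IndRep hval hg q x u = (q ⟨x, h⟩ u.1, q ⟨g⁻¹ * x * g, conj_mem_ker h g⟩ u.2) := by
  simp only [IndRep, MonoidHom.coe_mk, OneHom.coe_mk]
  rw [dif_pos h]
  rfl

theorem IndRep_apply_not_mem (q : Representation ℂ μ.ker V) {x : G} (h : x ∉ μ.ker)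
    (u : V × V) :
    IndRep hval hg q x u = (q ⟨x * g, mul_mem_ker hval h hg⟩ u.2,
      q ⟨g⁻¹ * x, inv_mul_mem_ker hval hg h⟩ u.1) := by
  simp only [IndRep, MonoidHom.coe_mk, OneHom.coe_mk]
  rw [dif_neg h]
  rfl

/-- The induced representation is always isomorphic to its twist. -/
theorem indRep_twist (q : Representation ℂ μ.ker V) :
    RepIso (twistRep μ (IndRep hval hg q)) (IndRep hval hg q) := by
  refine ⟨LinearEquiv.prodCongr (LinearEquiv.refl ℂ V) (LinearEquiv.neg ℂ), ?_⟩
  intro x u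
  rw [twistRep_apply]
  by_cases h : x ∈ μ.ker
  · rw [mu_coe_one h, one_smul, IndRep_apply_mem hval hg q h, IndRep_apply_mem hval hg q h]
    simp [LinearEquiv.prodCongr_apply]
  · rw [mu_coe_neg hval h, IndRep_apply_not_mem hval hg q h, IndRep_apply_not_mem hval hg q h]
    simp [LinearEquiv.prodCongr_apply, Prod.smul_mk, LinearEquiv.neg_apply, map_neg]

theorem ind_congr {q : Representation ℂ μ.ker V} {q' : Representation ℂ μ.ker W}
    (h : RepIso q q') : RepIso (IndRep hval hg q) (IndRep hval hg q') := by
  obtain ⟨e, he⟩ := h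
  refine ⟨LinearEquiv.prodCongr e e, ?_⟩
  intro x u
  by_cases hx : x ∈ μ.ker
  · rw [IndRep_apply_mem hval hg q hx, IndRep_apply_mem hval hg q' hx]
    simp only [LinearEquiv.prodCongr_apply]
    rw [he, he]
  · rw [IndRep_apply_not_mem hval hg q hx, IndRep_apply_not_mem hval hg q' hx]
    simp only [LinearEquiv.prodCongr_apply]
    rw [he, he]

theorem ind_conj (q : Representation ℂ μ.ker V) :
    RepIso (IndRep hval hg (conjRep g q)) (IndRep hval hg q) := by
  have hg2 : g * g ∈ μ.ker := mul_mem_ker hval hg hg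
  have hq1 : (q ⟨g * g, hg2⟩) ∘ₗ (q ⟨g * g, hg2⟩⁻¹) = LinearMap.id := by
    ext v
    simp only [LinearMap.coe_comp, Function.comp_apply, LinearMap.id_coe, id_eq]
    rw [rep_mul, mul_inv_cancel, map_one, Module.End.one_apply]
  have hq2 : (q ⟨g * g, hg2⟩⁻¹) ∘ₗ (q ⟨g * g, hg2⟩) = LinearMap.id := by
    ext v
    simp only [LinearMap.coe_comp, Function.comp_apply, LinearMap.id_coe, id_eq]
    rw [rep_mul, inv_mul_cancel, map_one, Module.End.one_apply]
  refine ⟨(LinearEquiv.prodComm ℂ V V).trans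
    (LinearEquiv.prodCongr (LinearEquiv.ofLinear (q ⟨g * g, hg2⟩) (q ⟨g * g, hg2⟩⁻¹) hq1 hq2)
      (LinearEquiv.refl ℂ V)), ?_⟩
  intro x u
  by_cases hx : x ∈ μ.ker
  · rw [IndRep_apply_mem hval hg _ hx, IndRep_apply_mem hval hg q hx]
    simp only [LinearEquiv.trans_apply, LinearEquiv.prodComm_apply, Prod.swap,
      LinearEquiv.prodCongr_apply, LinearEquiv.refl_apply, LinearEquiv.ofLinear_apply,
      conjRep_apply]
    refine Prod.ext ?_ ?_
    · show q ⟨g * g, hg2⟩ (q _ u.2) = q ⟨x, hx⟩ (q ⟨g * g, hg2⟩ u.2)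
      rw [q_mul, q_mul]
      exact q_congr q (by push_cast; group) u.2
    · rfl
  · rw [IndRep_apply_not_mem hval hg _ hx, IndRep_apply_not_mem hval hg q hx]
    simp only [LinearEquiv.trans_apply, LinearEquiv.prodComm_apply, Prod.swap,
      LinearEquiv.prodCongr_apply, LinearEquiv.refl_apply, LinearEquiv.ofLinear_apply,
      conjRep_apply]
    refine Prod.ext ?_ ?_
    · show q ⟨g * g, hg2⟩ (q _ u.1) = q _ u.1
      rw [q_mul]
      exact q_congr q (by push_cast; group) u.1
    · show q _ u.2 = q _ (q ⟨g * g, hg2⟩ u.2)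
      rw [q_mul]
      exact q_congr q (by push_cast; group) u.2

end Ind


section FourSub

variable {H : Type*} [Group H] {V W : Type*} [AddCommGroup V] [Module ℂ V]
  [AddCommGroup W] [Module ℂ W]

theorem four_submodule {σ₁ : Representation ℂ H V} {σ₂ : Representation ℂ H W}
    (h1 : IsIrreducibleRep σ₁) (h2 : IsIrreducibleRep σ₂) (hni : ¬ RepIso σ₁ σ₂)
    (p : Submodule ℂ (V × W)) (hp : ∀ (k : H), ∀ u ∈ p, ((σ₁ k).prodMap (σ₂ k)) u ∈ p) :
    p = ⊥ ∨ p = ⊤ ∨ p = Submodule.prod ⊤ ⊥ ∨ p = Submodule.prod ⊥ ⊤ := by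
  set A := p.map (LinearMap.fst ℂ V W) with hA
  set B := p.map (LinearMap.snd ℂ V W) with hB
  set A' := p.comap (LinearMap.inl ℂ V W) with hA'
  set B' := p.comap (LinearMap.inr ℂ V W) with hB'
  have hAinv : ∀ (k : H), ∀ v ∈ A, σ₁ k v ∈ A := by
    intro k v hv
    rw [hA, Submodule.mem_map] at hv ⊢
    obtain ⟨u, hu, rfl⟩ := hv
    exact ⟨(σ₁ k).prodMap (σ₂ k) u, hp k u hu, rfl⟩
  have hBinv : ∀ (k : H), ∀ w ∈ B, σ₂ k w ∈ B := by
    intro k w hw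
    rw [hB, Submodule.mem_map] at hw ⊢
    obtain ⟨u, hu, rfl⟩ := hw
    exact ⟨(σ₁ k).prodMap (σ₂ k) u, hp k u hu, rfl⟩
  have hA'inv : ∀ (k : H), ∀ v ∈ A', σ₁ k v ∈ A' := by
    intro k v hv
    rw [hA', Submodule.mem_comap] at hv ⊢
    have he : (LinearMap.inl ℂ V W) (σ₁ k v) = (σ₁ k).prodMap (σ₂ k) ((LinearMap.inl ℂ V W) v) := by
      simp [LinearMap.prodMap_apply]
    rw [he]
    exact hp k _ hv
  have hB'inv : ∀ (k : H), ∀ w ∈ B', σ₂ k w ∈ B' := by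
    intro k w hw
    rw [hB', Submodule.mem_comap] at hw ⊢
    have he : (LinearMap.inr ℂ V W) (σ₂ k w) = (σ₁ k).prodMap (σ₂ k) ((LinearMap.inr ℂ V W) w) := by
      simp [LinearMap.prodMap_apply]
    rw [he]
    exact hp k _ hw
  rcases h1.2 A hAinv with hA0 | hAt
  · rcases h2.2 B hBinv with hB0 | hBt
    · left
      rw [eq_bot_iff]
      intro u hu
      have h1' : u.1 ∈ A := ⟨u, hu, rfl⟩
      have h2' : u.2 ∈ B := ⟨u, hu, rfl⟩
      rw [hA0] at h1'
      rw [hB0] at h2'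
      simp only [Submodule.mem_bot] at h1' h2' ⊢
      exact Prod.ext h1' h2'
    · right; right; right
      apply le_antisymm
      · intro u hu
        rw [Submodule.mem_prod]
        refine ⟨?_, trivial⟩
        have h1' : u.1 ∈ A := ⟨u, hu, rfl⟩
        rwa [hA0] at h1'
      · intro u hu
        rw [Submodule.mem_prod] at hu
        have hu2 : u.2 ∈ B := by rw [hBt]; trivial
        rw [hB, Submodule.mem_map] at hu2
        obtain ⟨w, hw, hw2⟩ := hu2
        have hw1 : w.1 ∈ A := ⟨w, hw, rfl⟩
        rw [hA0, Submodule.mem_bot] at hw1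
        have hu1 : u.1 = 0 := by simpa using hu.1
        rwa [show u = w from Prod.ext (by rw [hu1, hw1]) hw2.symm]
  · rcases h2.2 B hBinv with hB0 | hBt
    · -- A = ⊤, B = ⊥ : p = ⊤ × ⊥
      right; right; left
      apply le_antisymm
      · intro u hu
        rw [Submodule.mem_prod]
        refine ⟨trivial, ?_⟩
        have h2' : u.2 ∈ B := ⟨u, hu, rfl⟩
        rwa [hB0] at h2'
      · intro u hu
        rw [Submodule.mem_prod] at hu
        have hu1 : u.1 ∈ A := by rw [hAt]; trivial
        rw [hA, Submodule.mem_map] at hu1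
        obtain ⟨w, hw, hw1⟩ := hu1
        have hw2 : w.2 ∈ B := ⟨w, hw, rfl⟩
        rw [hB0, Submodule.mem_bot] at hw2
        have hu2 : u.2 = 0 := by simpa using hu.2
        rwa [show u = w from Prod.ext hw1.symm (by rw [hu2, hw2])]
    · rcases h1.2 A' hA'inv with hA'0 | hA't
      · rcases h2.2 B' hB'inv with hB'0 | hB't
        · -- graph case : contradiction with non-isomorphism
          exfalso
          apply hni
          have huniq : ∀ (v : V) (w w' : W), (v, w) ∈ p → (v, w') ∈ p → w = w' := by
            intro v w w' hw hw'
            have hsub : ((v, w) - (v, w') : V × W) ∈ p := sub_mem hw hw'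
            have hmem : w - w' ∈ B' := by
              rw [hB', Submodule.mem_comap]
              have he : (LinearMap.inr ℂ V W) (w - w') = ((v, w) - (v, w') : V × W) := by
                simp [Prod.ext_iff]
              rw [he]; exact hsub
            rw [hB'0, Submodule.mem_bot] at hmem
            exact sub_eq_zero.mp hmem
          have hex : ∀ v : V, ∃ w : W, (v, w) ∈ p := by
            intro v
            have hv : v ∈ A := by rw [hAt]; trivial
            rw [hA, Submodule.mem_map] at hv
            obtain ⟨u, hu, hu1⟩ := hv
            exact ⟨u.2, by rwa [show (v, u.2) = u from Prod.ext hu1.symm rfl]⟩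
          let L1 : ↥p →ₗ[ℂ] V := (LinearMap.fst ℂ V W) ∘ₗ p.subtype
          have hL1b : Function.Bijective L1 := by
            constructor
            · rw [injective_iff_map_eq_zero]
              intro a ha
              have ha' : ((a : V × W)).1 = 0 := ha
              have h2m : ((a : V × W)).2 ∈ B' := by
                rw [hB', Submodule.mem_comap]
                have he : (LinearMap.inr ℂ V W) ((a : V × W)).2 = (a : V × W) :=
                  Prod.ext (by simp [ha']) rfl
                rw [he]; exact a.2
              rw [hB'0, Submodule.mem_bot] at h2m
              exact Subtype.ext (Prod.ext ha' h2m)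
            · intro v
              obtain ⟨w, hw⟩ := hex v
              exact ⟨⟨(v, w), hw⟩, rfl⟩
          let e1 := LinearEquiv.ofBijective L1 hL1b
          let f : V →ₗ[ℂ] W := (LinearMap.snd ℂ V W) ∘ₗ p.subtype ∘ₗ (e1.symm : V →ₗ[ℂ] ↥p)
          have hgraph : ∀ v : V, (v, f v) ∈ p := by
            intro v
            have h1' : ((e1.symm v : ↥p) : V × W).1 = v := e1.apply_symm_apply v
            have h2' : (v, f v) = ((e1.symm v : ↥p) : V × W) := Prod.ext h1'.symm rfl
            rw [h2']
            exact (e1.symm v : ↥p).2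
          have hfequiv : ∀ (k : H) (v : V), f (σ₁ k v) = σ₂ k (f v) := by
            intro k v
            have hm1 : (σ₁ k v, σ₂ k (f v)) ∈ p := by
              have := hp k (v, f v) (hgraph v)
              rwa [LinearMap.prodMap_apply] at this
            exact huniq _ _ _ (hgraph (σ₁ k v)) hm1
          have hfb : Function.Bijective f := by
            constructor
            · rw [injective_iff_map_eq_zero]
              intro v hv
              have hva : v ∈ A' := by
                rw [hA', Submodule.mem_comap]
                have he : (LinearMap.inl ℂ V W) v = (v, f v) := Prod.ext rfl (by simp [hv])
                rw [he]; exact hgraph v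
              rw [hA'0, Submodule.mem_bot] at hva
              exact hva
            · intro w
              have hw : w ∈ B := by rw [hBt]; trivial
              rw [hB, Submodule.mem_map] at hw
              obtain ⟨u, hu, hu2⟩ := hw
              refine ⟨u.1, ?_⟩
              have hu' : (u.1, w) ∈ p := by
                rwa [show (u.1, w) = u from Prod.ext rfl hu2.symm]
              exact huniq _ _ _ (hgraph u.1) hu'
          exact ⟨LinearEquiv.ofBijective f hfb, fun k v => hfequiv k v⟩
        · -- B' = ⊤ : 0 × W ≤ p, and A = ⊤ gives p = ⊤
          right; left
          rw [Submodule.eq_top_iff']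
          intro u
          have hu1 : u.1 ∈ A := by rw [hAt]; trivial
          rw [hA, Submodule.mem_map] at hu1
          obtain ⟨w, hw, hw1⟩ := hu1
          rw [LinearMap.fst_apply] at hw1
          have hmem2 : ((0 : V), u.2 - w.2) ∈ p := by
            have hm : u.2 - w.2 ∈ B' := by rw [hB't]; trivial
            rw [hB', Submodule.mem_comap] at hm
            exact hm
          have := add_mem hw hmem2
          rwa [show w + ((0:V), u.2 - w.2) = u from Prod.ext (by simp [hw1]) (by simp)] at this
      · -- A' = ⊤ : V × 0 ≤ p, and B = ⊤ gives p = ⊤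
        right; left
        rw [Submodule.eq_top_iff']
        intro u
        have hu2 : u.2 ∈ B := by rw [hBt]; trivial
        rw [hB, Submodule.mem_map] at hu2
        obtain ⟨w, hw, hw2⟩ := hu2
        rw [LinearMap.snd_apply] at hw2
        have hmem1 : (u.1 - w.1, (0 : W)) ∈ p := by
          have hm : u.1 - w.1 ∈ A' := by rw [hA't]; trivial
          rw [hA', Submodule.mem_comap] at hm
          exact hm
        have := add_mem hw hmem1
        rwa [show w + (u.1 - w.1, (0:W)) = u from Prod.ext (by simp) (by simp [hw2])] at this

end FourSub


section IndIrr

variable {G : Type*} [Group G] {μ : G →* ℂˣ}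
variable {V W : Type*} [AddCommGroup V] [Module ℂ V] [AddCommGroup W] [Module ℂ W]
variable (hval : ∀ x, μ x = 1 ∨ μ x = -1) {g : G} (hg : g ∉ μ.ker)

theorem ind_fst (q : Representation ℂ μ.ker V) (k : μ.ker) (v : V) :
    IndRep hval hg q ↑k (v, 0) = (q k v, 0) := by
  rw [IndRep_apply_mem hval hg q k.2]
  exact Prod.ext rfl (map_zero _)

theorem ind_snd (q : Representation ℂ μ.ker V) (k : μ.ker) (v : V) :
    IndRep hval hg q ↑k (0, v) = (0, (conjRep g q) k v) := by
  rw [IndRep_apply_mem hval hg q k.2]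
  refine Prod.ext (map_zero _) ?_
  rw [conjRep_apply]

theorem indRep_irr {q : Representation ℂ μ.ker V} (hq : IsIrreducibleRep q)
    (hn : ¬ RepIso (conjRep g q) q) : IsIrreducibleRep (IndRep hval hg q) := by
  haveI : Nontrivial V := hq.1
  obtain ⟨v0, hv0⟩ := exists_ne (0 : V)
  refine ⟨⟨(v0, 0), 0, fun hcon => hv0 (congrArg Prod.fst hcon)⟩, fun p hp => ?_⟩
  have hpK : ∀ (k : μ.ker), ∀ u ∈ p, ((q k).prodMap ((conjRep g q) k)) u ∈ p := by
    intro k u hu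
    have h0 := hp ↑k u hu
    rw [IndRep_apply_mem hval hg q k.2] at h0
    rw [LinearMap.prodMap_apply, conjRep_apply]
    exact h0
  rcases four_submodule hq (conj_irr hq) (fun h => hn (repIso_symm h)) p hpK with h|h|h|h
  · exact Or.inl h
  · exact Or.inr h
  · exfalso
    have hmem : (v0, (0:V)) ∈ p := by
      rw [h, Submodule.mem_prod]
      exact ⟨trivial, by simp⟩
    have h2 := hp g (v0, 0) hmem
    rw [IndRep_apply_not_mem hval hg q hg, h, Submodule.mem_prod] at h2
    have h3 : q ⟨g⁻¹ * g, inv_mul_mem_ker hval hg hg⟩ v0 = 0 := by simpa using h2.2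
    rw [q_congr q (show ((⟨g⁻¹ * g, inv_mul_mem_ker hval hg hg⟩ : μ.ker) : G)
      = ((1 : μ.ker) : G) from by push_cast; group) v0, map_one] at h3
    exact hv0 h3
  · exfalso
    have hmem : ((0:V), v0) ∈ p := by
      rw [h, Submodule.mem_prod]
      exact ⟨by simp, trivial⟩
    have h2 := hp g (0, v0) hmem
    rw [IndRep_apply_not_mem hval hg q hg, h, Submodule.mem_prod] at h2
    have h3 : q ⟨g * g, mul_mem_ker hval hg hg⟩ v0 = 0 := by simpa using h2.1
    have h4 := congrArg (q ⟨g * g, mul_mem_ker hval hg hg⟩⁻¹) h3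
    rw [rep_mul, inv_mul_cancel, map_one, Module.End.one_apply, map_zero] at h4
    exact hv0 h4

theorem ind_inj {q : Representation ℂ μ.ker V} {q' : Representation ℂ μ.ker W}
    [FiniteDimensional ℂ W]
    (hirr' : IsIrreducibleRep (IndRep hval hg q'))
    (hE : RepIso (IndRep hval hg q) (IndRep hval hg q')) :
    RepIso q q' ∨ RepIso q (conjRep g q') := by
  obtain ⟨E, hE⟩ := hE
  set J : (V × V) →ₗ[ℂ] V × V :=
    LinearMap.prod (LinearMap.fst ℂ V V) (-(LinearMap.snd ℂ V V)) with hJ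
  set J' : (W × W) →ₗ[ℂ] W × W :=
    LinearMap.prod (LinearMap.fst ℂ W W) (-(LinearMap.snd ℂ W W)) with hJ'
  have hJa : ∀ u : V × V, J u = (u.1, -u.2) := fun u => rfl
  have hJ'a : ∀ u : W × W, J' u = (u.1, -u.2) := fun u => rfl
  have hJtw : ∀ (x : G) (u : V × V),
      J (IndRep hval hg q x u) = (μ x : ℂ) • IndRep hval hg q x (J u) := by
    intro x u
    by_cases h : x ∈ μ.ker
    · rw [mu_coe_one h, one_smul, IndRep_apply_mem hval hg q h,
        IndRep_apply_mem hval hg q h, hJa, hJa]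
      simp
    · rw [mu_coe_neg hval h, IndRep_apply_not_mem hval hg q h,
        IndRep_apply_not_mem hval hg q h, hJa, hJa]
      simp [Prod.smul_mk]
  have hJ'tw : ∀ (x : G) (u : W × W),
      J' (IndRep hval hg q' x u) = (μ x : ℂ) • IndRep hval hg q' x (J' u) := by
    intro x u
    by_cases h : x ∈ μ.ker
    · rw [mu_coe_one h, one_smul, IndRep_apply_mem hval hg q' h,
        IndRep_apply_mem hval hg q' h, hJ'a, hJ'a]
      simp
    · rw [mu_coe_neg hval h, IndRep_apply_not_mem hval hg q' h,
        IndRep_apply_not_mem hval hg q' h, hJ'a, hJ'a]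
      simp [Prod.smul_mk]
  have hEsymm : ∀ (x : G) (u : W × W),
      E.symm (IndRep hval hg q' x u) = IndRep hval hg q x (E.symm u) := by
    intro x u
    apply E.injective
    rw [hE, E.apply_symm_apply, E.apply_symm_apply]
  set D : (W × W) →ₗ[ℂ] W × W := E.toLinearMap ∘ₗ J ∘ₗ (E.symm : (W×W) →ₗ[ℂ] (V×V)) with hD
  have hDa : ∀ u, D u = E (J (E.symm u)) := fun u => rfl
  have hDtw : ∀ (x : G) (u : W × W),
      D (IndRep hval hg q' x u) = (μ x : ℂ) • IndRep hval hg q' x (D u) := by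
    intro x u
    rw [hDa, hEsymm, hJtw, map_smul, hE, hDa]
  have hJ'J' : ∀ u, J' (J' u) = u := by
    intro u; rw [hJ'a, hJ'a]; simp
  have hC : ∀ (x : G) (u : W × W),
      (D ∘ₗ J') (IndRep hval hg q' x u) = IndRep hval hg q' x ((D ∘ₗ J') u) := by
    intro x u
    simp only [LinearMap.comp_apply]
    rw [hJ'tw, map_smul, hDtw, smul_smul, mu_sq hval, one_smul]
  obtain ⟨c, hc⟩ := schur hirr' (D ∘ₗ J') hC
  simp only [LinearMap.comp_apply] at hc
  have hDJ : ∀ u, D u = c • J' u := by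
    intro u
    have := hc (J' u)
    rwa [hJ'J'] at this
  have hDD : ∀ u, D (D u) = u := by
    intro u
    rw [hDa, hDa, E.symm_apply_apply]
    have hJJ : ∀ w : V × V, J (J w) = w := by
      intro w; rw [hJa, hJa]; simp
    rw [hJJ, E.apply_symm_apply]
  have hc2 : c * c = 1 := by
    haveI : Nontrivial (W × W) := hirr'.1
    obtain ⟨u0, hu0⟩ := exists_ne (0 : W × W)
    have h1 : (c * c) • u0 = u0 := by
      have h0 := hDD u0
      rw [hDJ u0, map_smul, hDJ (J' u0), hJ'J', smul_smul] at h0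
      exact h0
    by_contra hne
    have h2 : (c * c - 1) • u0 = 0 := by rw [sub_smul, one_smul, h1, sub_self]
    rcases smul_eq_zero.mp h2 with h | h
    · exact hne (sub_eq_zero.mp h)
    · exact hu0 h
  have hEJ : ∀ u : V × V, E (J u) = c • J' (E u) := by
    intro u
    have := hDJ (E u)
    rwa [hDa, E.symm_apply_apply] at this
  rcases mul_self_eq_one_iff.mp hc2 with h1 | h1
  · -- c = 1 : q ≅ q'
    left
    have hsnd0 : ∀ v : V, (E (v, 0)).2 = 0 := by
      intro v
      have h4 := hEJ (v, 0)
      rw [hJa] at h4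
      dsimp only at h4
      rw [neg_zero, h1, one_smul, hJ'a] at h4
      exact eq_zero_of_eq_neg (congrArg Prod.snd h4)
    set f : V →ₗ[ℂ] W :=
      (LinearMap.fst ℂ W W) ∘ₗ (E : (V×V) →ₗ[ℂ] (W×W)) ∘ₗ (LinearMap.inl ℂ V V) with hf
    have hEv : ∀ v : V, E (v, 0) = (f v, 0) := fun v => Prod.ext rfl (hsnd0 v)
    have hfeq : ∀ (k : μ.ker) (v : V), f (q k v) = q' k (f v) := by
      intro k v
      have h0 := hE ↑k (v, 0)
      rw [ind_fst hval hg q k v, hEv v, ind_fst hval hg q' k (f v), hEv (q k v)] at h0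
      exact congrArg Prod.fst h0
    have hfb : Function.Bijective f := by
      constructor
      · rw [injective_iff_map_eq_zero]
        intro v hv
        have h0 : E (v, 0) = E 0 := by rw [hEv v, hv, map_zero]; rfl
        exact congrArg Prod.fst (E.injective h0)
      · intro w
        set u := E.symm (w, 0) with hu
        have hEu : E u = (w, 0) := E.apply_symm_apply _
        have h2 : E (J u) = E u := by
          rw [hEJ u, h1, one_smul, hEu, hJ'a]
          exact Prod.ext rfl (by simp)
        have hJu : J u = u := E.injective h2
        have hu2 : u.2 = 0 := by
          have h3 := congrArg Prod.snd hJu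
          exact eq_zero_of_eq_neg (Eq.symm h3)
        refine ⟨u.1, ?_⟩
        have h3 : ((u.1, (0:V)) : V × V) = u := Prod.ext rfl hu2.symm
        have h4 : (f u.1, (0:W)) = (w, 0) := by rw [← hEv, h3, hEu]
        exact congrArg Prod.fst h4
    exact ⟨LinearEquiv.ofBijective f hfb, fun k v => hfeq k v⟩
  · -- c = -1 : q ≅ conjRep g q'
    right
    have hfst0 : ∀ v : V, (E (v, 0)).1 = 0 := by
      intro v
      have h4 := hEJ (v, 0)
      rw [hJa] at h4
      dsimp only at h4
      rw [neg_zero, h1, hJ'a] at h4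
      have h5 := congrArg Prod.fst h4
      rw [Prod.smul_mk, neg_one_smul] at h5
      exact eq_zero_of_eq_neg h5
    set f : V →ₗ[ℂ] W :=
      (LinearMap.snd ℂ W W) ∘ₗ (E : (V×V) →ₗ[ℂ] (W×W)) ∘ₗ (LinearMap.inl ℂ V V) with hf
    have hEv : ∀ v : V, E (v, 0) = (0, f v) := fun v => Prod.ext (hfst0 v) rfl
    have hfeq : ∀ (k : μ.ker) (v : V), f (q k v) = (conjRep g q') k (f v) := by
      intro k v
      have h0 := hE ↑k (v, 0)
      rw [ind_fst hval hg q k v, hEv v, ind_snd hval hg q' k (f v), hEv (q k v)] at h0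
      exact congrArg Prod.snd h0
    have hfb : Function.Bijective f := by
      constructor
      · rw [injective_iff_map_eq_zero]
        intro v hv
        have h0 : E (v, 0) = E 0 := by rw [hEv v, hv, map_zero]; rfl
        exact congrArg Prod.fst (E.injective h0)
      · intro w
        set u := E.symm (0, w) with hu
        have hEu : E u = (0, w) := E.apply_symm_apply _
        have h2 : E (J u) = E u := by
          rw [hEJ u, h1, hEu, hJ'a]
          refine Prod.ext ?_ ?_
          · rw [Prod.smul_mk, neg_one_smul]
            simp
          · rw [Prod.smul_mk]
            simp
        have hJu : J u = u := E.injective h2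
        have hu2 : u.2 = 0 := by
          have h3 := congrArg Prod.snd hJu
          exact eq_zero_of_eq_neg (Eq.symm h3)
        refine ⟨u.1, ?_⟩
        have h3 : ((u.1, (0:V)) : V × V) = u := Prod.ext rfl hu2.symm
        have h4 : ((0:W), f u.1) = (0, w) := by rw [← hEv, h3, hEu]
        exact congrArg Prod.snd h4
    exact ⟨LinearEquiv.ofBijective f hfb, fun k v => hfeq k v⟩

end IndIrr


section Clifford

variable {G : Type*} [Group G] {μ : G →* ℂˣ}
variable (hval : ∀ x, μ x = 1 ∨ μ x = -1) {g : G} (hg : g ∉ μ.ker)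

set_option maxHeartbeats 2000000 in
theorem clifford_selftwist {V : Type*} [AddCommGroup V] [Module ℂ V] [FiniteDimensional ℂ V]
    (τ : Representation ℂ G V) (hirr : IsIrreducibleRep τ)
    (hiso : RepIso (twistRep μ τ) τ) :
    ∃ (n : ℕ) (q : Representation ℂ μ.ker (Fin n → ℂ)),
      IsIrreducibleRep q ∧ ¬ RepIso (conjRep g q) q ∧ RepIso (IndRep hval hg q) τ := by
  obtain ⟨e0, he0⟩ := hiso
  haveI : Nontrivial V := hirr.1
  have hA : ∀ (x : G) (v : V), e0 (τ x v) = (μ x : ℂ) • τ x (e0 v) := by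
    intro x v
    have h := he0 x v
    rw [twistRep_apply, map_smul] at h
    calc e0 (τ x v) = ((μ x : ℂ) * (μ x : ℂ)) • e0 (τ x v) := by rw [mu_sq hval, one_smul]
    _ = (μ x : ℂ) • ((μ x : ℂ) • e0 (τ x v)) := by rw [← smul_smul]
    _ = (μ x : ℂ) • τ x (e0 v) := by rw [h]
  obtain ⟨c, hc⟩ := schur hirr (e0.toLinearMap ∘ₗ e0.toLinearMap) (by
    intro x v
    simp only [LinearMap.comp_apply, LinearEquiv.coe_coe]
    rw [hA, map_smul, hA, smul_smul, mu_sq hval, one_smul])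
  simp only [LinearMap.comp_apply, LinearEquiv.coe_coe] at hc
  obtain ⟨v1, hv1⟩ := exists_ne (0 : V)
  have hcne : c ≠ 0 := by
    intro h0
    apply hv1
    apply e0.injective
    apply e0.injective
    rw [hc, h0, zero_smul, map_zero, map_zero]
  obtain ⟨s, hs⟩ := exists_sqrt c
  have hsne : s ≠ 0 := fun h => hcne (by rw [← hs, h, mul_zero])
  set ee : V →ₗ[ℂ] V := s⁻¹ • (e0 : V →ₗ[ℂ] V) with heedef
  have heea : ∀ v, ee v = s⁻¹ • e0 v := fun v => rfl
  have hee2 : ∀ v, ee (ee v) = v := by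
    intro v
    rw [heea, heea, map_smul, hc, smul_smul, smul_smul,
      show s⁻¹ * s⁻¹ * c = 1 from by rw [← hs]; field_simp]
    exact one_smul _ _
  have heetw : ∀ (x : G) (v : V), ee (τ x v) = (μ x : ℂ) • τ x (ee v) := by
    intro x v
    rw [heea, heea, hA, map_smul, smul_comm]
  have heK : ∀ (a : G), a ∈ μ.ker → ∀ v, ee (τ a v) = τ a (ee v) := by
    intro a ha v
    rw [heetw, mu_coe_one ha, one_smul]
  have heg : ∀ v, ee (τ g v) = -(τ g (ee v)) := by
    intro v
    rw [heetw, mu_coe_neg hval hg, neg_one_smul]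
  have hginv : g⁻¹ ∉ μ.ker := fun h => hg (by simpa using inv_mem h)
  have hegi : ∀ v, ee (τ g⁻¹ v) = -(τ g⁻¹ (ee v)) := by
    intro v
    rw [heetw, mu_coe_neg hval hginv, neg_one_smul]
  set P : V →ₗ[ℂ] V := (2⁻¹ : ℂ) • (LinearMap.id + ee) with hPdef
  have hPa : ∀ v, P v = (2⁻¹ : ℂ) • (v + ee v) := fun v => rfl
  have heP : ∀ v, ee (P v) = P v := by
    intro v
    rw [hPa, map_smul, map_add, hee2, add_comm (ee v) v]
  have hPP : ∀ v, P (P v) = P v := by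
    intro v
    rw [hPa (P v), heP, ← two_smul ℂ (P v), smul_smul,
      show (2⁻¹ : ℂ) * 2 = 1 from by norm_num, one_smul]
  have hPfix : ∀ v, ee v = v → P v = v := by
    intro v h
    rw [hPa, h, ← two_smul ℂ v, smul_smul,
      show (2⁻¹ : ℂ) * 2 = 1 from by norm_num, one_smul]
  have hPkill : ∀ v, ee v = -v → P v = 0 := by
    intro v h
    rw [hPa, h, add_neg_cancel, smul_zero]
  have hPK : ∀ (a : G), a ∈ μ.ker → ∀ v, P (τ a v) = τ a (P v) := by
    intro a ha v
    rw [hPa, hPa, map_smul, map_add, heK a ha]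
  have hPgP : ∀ v, P (τ g (P v)) = 0 := by
    intro v
    apply hPkill
    rw [heg, heP]
  have hPgiP : ∀ v, P (τ g⁻¹ (P v)) = 0 := by
    intro v
    apply hPkill
    rw [hegi, heP]
  have hVp : ∃ v, P v ≠ 0 := by
    by_contra hno
    push_neg at hno
    have hee_neg : ∀ v, ee v = -v := by
      intro v
      have h0 := hno v
      rw [hPa] at h0
      rcases smul_eq_zero.mp h0 with h | h
      · norm_num at h
      · exact eq_neg_iff_add_eq_zero.mpr (by rwa [add_comm] at h)
    have hg0 : ∀ v, τ g v = 0 := by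
      intro v
      have h1 := heg v
      rw [hee_neg (τ g v), hee_neg v, map_neg, neg_neg] at h1
      exact eq_zero_of_eq_neg (Eq.symm h1)
    apply hv1
    have h2 := hg0 (τ g⁻¹ v1)
    rwa [rep_mul, mul_inv_cancel, map_one, Module.End.one_apply] at h2
  obtain ⟨vP, hvP⟩ := hVp
  set Vp := LinearMap.range P with hVpdef
  set n : ℕ := finrank ℂ Vp with hn
  set bb : Vp ≃ₗ[ℂ] (Fin n → ℂ) := (Module.finBasis ℂ Vp).equivFun with hbb
  set ι : (Fin n → ℂ) →ₗ[ℂ] V := Vp.subtype ∘ₗ (bb.symm : (Fin n → ℂ) →ₗ[ℂ] Vp) with hιdef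
  have hιa : ∀ w, ι w = ↑(bb.symm w) := fun w => rfl
  set r : V →ₗ[ℂ] (Fin n → ℂ) :=
    (bb : Vp →ₗ[ℂ] (Fin n → ℂ)) ∘ₗ (P.codRestrict Vp (fun v => LinearMap.mem_range_self P v))
    with hrdef
  have hra : ∀ v, r v = bb ⟨P v, LinearMap.mem_range_self P v⟩ := fun v => rfl
  have hPran : ∀ v : V, v ∈ Vp → P v = v := by
    rintro v ⟨u, rfl⟩
    exact hPP u
  have hPι : ∀ w, P (ι w) = ι w := by
    intro w
    exact hPran _ (by rw [hιa]; exact (bb.symm w).2)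
  have hrι : ∀ w, r (ι w) = w := by
    intro w
    rw [hra]
    have h1 : (⟨P (ι w), LinearMap.mem_range_self P (ι w)⟩ : Vp) = bb.symm w :=
      Subtype.ext (show P (ι w) = ↑(bb.symm w) from by rw [hPι, hιa])
    exact (congrArg bb h1).trans (bb.apply_symm_apply w)
  have hιr : ∀ v, ι (r v) = P v := by
    intro v
    rw [hra, hιa, bb.symm_apply_apply]
  have hιinj : ∀ w, ι w = 0 → w = 0 := by
    intro w h
    have h2 := hrι w
    rw [h, map_zero] at h2
    exact h2.symm
  have hrP : ∀ v, r (P v) = r v := by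
    intro v
    rw [hra, hra]
    congr 1
    exact Subtype.ext (hPP v)
  have hq1 : (fun (k : μ.ker) => r ∘ₗ τ ↑k ∘ₗ ι) 1 = 1 := by
    refine LinearMap.ext fun w => ?_
    simp only [LinearMap.comp_apply]
    rw [show ((1 : μ.ker) : G) = 1 from rfl, map_one, Module.End.one_apply, hrι]
    rfl
  have hqm : ∀ (k k' : μ.ker), (fun (k : μ.ker) => r ∘ₗ τ ↑k ∘ₗ ι) (k * k')
      = (fun (k : μ.ker) => r ∘ₗ τ ↑k ∘ₗ ι) k * (fun (k : μ.ker) => r ∘ₗ τ ↑k ∘ₗ ι) k' := by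
    intro k k'
    refine LinearMap.ext fun w => ?_
    simp only [LinearMap.comp_apply, Module.End.mul_apply]
    rw [hιr, ← hPK ↑k k.2 (τ ↑k' (ι w)), hrP, rep_mul]
    rfl
  set q : Representation ℂ μ.ker (Fin n → ℂ) := ⟨⟨fun k => r ∘ₗ τ ↑k ∘ₗ ι, hq1⟩, hqm⟩
    with hqdef0
  have hqa : ∀ (k : μ.ker) (w : Fin n → ℂ), q k w = r (τ ↑k (ι w)) := fun k w => rfl
  have hqι : ∀ (a : G) (ha : a ∈ μ.ker) (w : Fin n → ℂ), ι (q ⟨a, ha⟩ w) = τ a (ι w) := by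
    intro a ha w
    rw [hqa, hιr, hPK a ha, hPι]
  have hrτ : ∀ (a : G) (ha : a ∈ μ.ker) (v : V), r (τ a v) = q ⟨a, ha⟩ (r v) := by
    intro a ha v
    rw [hqa, hιr, ← hPK a ha, hrP]
  have hrgι : ∀ w, r (τ g (ι w)) = 0 := by
    intro w
    have h1 : P (τ g (ι w)) = 0 := by
      have h2 := hPgP (ι w)
      rwa [hPι] at h2
    rw [← hrP, h1, map_zero]
  have hrgiι : ∀ w, r (τ g⁻¹ (ι w)) = 0 := by
    intro w
    have h1 : P (τ g⁻¹ (ι w)) = 0 := by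
      have h2 := hPgiP (ι w)
      rwa [hPι] at h2
    rw [← hrP, h1, map_zero]
  haveI hnt : Nontrivial (Fin n → ℂ) := by
    refine ⟨⟨r vP, 0, fun h => hvP ?_⟩⟩
    have h2 := hιr vP
    rw [h, map_zero] at h2
    exact h2.symm
  have hqirr : IsIrreducibleRep q := by
    refine ⟨hnt, fun W0 hW0 => ?_⟩
    by_cases hbot : W0 = ⊥
    · exact Or.inl hbot
    right
    obtain ⟨w0, hw0m, hw0ne⟩ := (Submodule.ne_bot_iff W0).mp hbot
    set Wsub := W0.map ι with hWsub
    set U := Wsub ⊔ Wsub.map (τ g) with hU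
    have hUinv : ∀ (x : G), ∀ v ∈ U, τ x v ∈ U := by
      intro x v hv
      rw [hU, Submodule.mem_sup] at hv
      obtain ⟨a, ha, b, hb, rfl⟩ := hv
      rw [map_add]
      refine add_mem ?_ ?_
      · rw [hWsub, Submodule.mem_map] at ha
        obtain ⟨wa, hwa, rfl⟩ := ha
        by_cases hx : x ∈ μ.ker
        · apply Submodule.mem_sup_left
          rw [hWsub, Submodule.mem_map]
          exact ⟨q ⟨x, hx⟩ wa, hW0 ⟨x, hx⟩ wa hwa, hqι x hx wa⟩
        · apply Submodule.mem_sup_right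
          rw [Submodule.mem_map]
          refine ⟨ι (q ⟨g⁻¹ * x, inv_mul_mem_ker hval hg hx⟩ wa), ?_, ?_⟩
          · rw [hWsub, Submodule.mem_map]
            exact ⟨_, hW0 _ wa hwa, rfl⟩
          · rw [hqι _ (inv_mul_mem_ker hval hg hx), rep_mul]
            exact congrArg (fun z => τ z (ι wa)) (by group)
      · rw [Submodule.mem_map] at hb
        obtain ⟨u, hu, rfl⟩ := hb
        rw [hWsub, Submodule.mem_map] at hu
        obtain ⟨wb, hwb, rfl⟩ := hu
        by_cases hx : x ∈ μ.ker
        · apply Submodule.mem_sup_right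
          rw [Submodule.mem_map]
          refine ⟨ι (q ⟨g⁻¹ * x * g, conj_mem_ker hx g⟩ wb), ?_, ?_⟩
          · rw [hWsub, Submodule.mem_map]
            exact ⟨_, hW0 _ wb hwb, rfl⟩
          · rw [hqι _ (conj_mem_ker hx g), rep_mul, rep_mul]
            exact congrArg (fun z => τ z (ι wb)) (by group)
        · apply Submodule.mem_sup_left
          rw [hWsub, Submodule.mem_map]
          refine ⟨q ⟨x * g, mul_mem_ker hval hx hg⟩ wb, hW0 _ wb hwb, ?_⟩
          rw [hqι _ (mul_mem_ker hval hx hg), rep_mul]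
    rcases hirr.2 U hUinv with hUbot | hUtop
    · exfalso
      have hm : ι w0 ∈ U := Submodule.mem_sup_left
        (by rw [hWsub, Submodule.mem_map]; exact ⟨w0, hw0m, rfl⟩)
      rw [hUbot, Submodule.mem_bot] at hm
      exact hw0ne (hιinj w0 hm)
    · rw [Submodule.eq_top_iff']
      intro w
      have hmem : ι w ∈ U := by rw [hUtop]; trivial
      rw [hU, Submodule.mem_sup] at hmem
      obtain ⟨a, ha, b, hb, hab⟩ := hmem
      rw [hWsub, Submodule.mem_map] at ha
      obtain ⟨wa, hwa, rfl⟩ := ha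
      rw [Submodule.mem_map] at hb
      obtain ⟨u, hu, rfl⟩ := hb
      rw [hWsub, Submodule.mem_map] at hu
      obtain ⟨wb, hwb, rfl⟩ := hu
      have h5 := congrArg r hab
      rw [map_add, hrι, hrgι, add_zero, hrι] at h5
      rwa [← h5]
  have hg2 : g * g ∈ μ.ker := mul_mem_ker hval hg hg
  have hqniso : ¬ RepIso (conjRep g q) q := by
    rintro ⟨f0, hf0⟩
    have hf : ∀ (a : G) (ha : a ∈ μ.ker) (w : Fin n → ℂ),
        f0 (q ⟨g⁻¹ * a * g, conj_mem_ker ha g⟩ w) = q ⟨a, ha⟩ (f0 w) := by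
      intro a ha w
      have h0 := hf0 ⟨a, ha⟩ w
      rwa [conjRep_apply] at h0
    obtain ⟨lam, hlam⟩ := schur hqirr
      ((f0 : (Fin n → ℂ) →ₗ[ℂ] (Fin n → ℂ)) ∘ₗ (f0 : (Fin n → ℂ) →ₗ[ℂ] (Fin n → ℂ))
        ∘ₗ (q ⟨(g*g)⁻¹, inv_mem hg2⟩)) (by
      intro k w
      simp only [LinearMap.comp_apply, LinearEquiv.coe_coe]
      rw [rep_mul]
      rw [show ((⟨(g*g)⁻¹, inv_mem hg2⟩ : μ.ker) * k)
          = (⟨g⁻¹ * (g⁻¹ * ↑k * g) * g, conj_mem_ker (conj_mem_ker k.2 g) g⟩ : μ.ker)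
            * ⟨(g*g)⁻¹, inv_mem hg2⟩ from Subtype.ext (by push_cast; group)]
      rw [← rep_mul, hf (g⁻¹ * ↑k * g) (conj_mem_ker k.2 g), hf ↑k k.2])
    simp only [LinearMap.comp_apply, LinearEquiv.coe_coe] at hlam
    have hlamne : lam ≠ 0 := by
      intro h0
      obtain ⟨w1, hw1⟩ := exists_ne (0 : Fin n → ℂ)
      have h1 := hlam (q ⟨g*g, hg2⟩ w1)
      rw [h0, zero_smul, rep_mul,
        show ((⟨(g*g)⁻¹, inv_mem hg2⟩ : μ.ker) * ⟨g*g, hg2⟩) = (1 : μ.ker)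
          from Subtype.ext (by push_cast; group), map_one, Module.End.one_apply] at h1
      apply hw1
      apply f0.injective
      apply f0.injective
      rw [h1, map_zero, map_zero]
    obtain ⟨s2, hs2⟩ := exists_sqrt lam
    have hs2ne : s2 ≠ 0 := fun h => hlamne (by rw [← hs2, h, mul_zero])
    set fL : (Fin n → ℂ) →ₗ[ℂ] (Fin n → ℂ) := s2⁻¹ • (f0 : (Fin n → ℂ) →ₗ[ℂ] _) with hfLdef
    set fI : (Fin n → ℂ) →ₗ[ℂ] (Fin n → ℂ) := s2 • (f0.symm : (Fin n → ℂ) →ₗ[ℂ] _) with hfIdef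
    have hfLa : ∀ w, fL w = s2⁻¹ • f0 w := fun w => rfl
    have hfIa : ∀ w, fI w = s2 • f0.symm w := fun w => rfl
    have hfLfI : ∀ w, fL (fI w) = w := by
      intro w
      rw [hfIa, hfLa, map_smul, f0.apply_symm_apply, smul_smul, inv_mul_cancel₀ hs2ne,
        one_smul]
    have hfIfL : ∀ w, fI (fL w) = w := by
      intro w
      rw [hfLa, hfIa, map_smul, f0.symm_apply_apply, smul_smul, mul_inv_cancel₀ hs2ne,
        one_smul]
    have hfLq : ∀ (a : G) (ha : a ∈ μ.ker) (w : Fin n → ℂ),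
        fL (q ⟨g⁻¹ * a * g, conj_mem_ker ha g⟩ w) = q ⟨a, ha⟩ (fL w) := by
      intro a ha w
      rw [hfLa, hfLa, hf a ha, map_smul]
    have hfIq : ∀ (a : G) (ha : a ∈ μ.ker) (w : Fin n → ℂ),
        fI (q ⟨a, ha⟩ w) = q ⟨g⁻¹ * a * g, conj_mem_ker ha g⟩ (fI w) := by
      intro a ha w
      apply f0.injective
      rw [hf a ha (fI w), hfIa, hfIa, map_smul, map_smul, f0.apply_symm_apply,
        f0.apply_symm_apply, map_smul]
    have hfLfL : ∀ w, fL (fL w) = q ⟨g*g, hg2⟩ w := by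
      intro w
      have h0 := hlam (q ⟨g*g, hg2⟩ w)
      rw [rep_mul,
        show ((⟨(g*g)⁻¹, inv_mem hg2⟩ : μ.ker) * ⟨g*g, hg2⟩) = (1 : μ.ker)
          from Subtype.ext (by push_cast; group), map_one, Module.End.one_apply] at h0
      rw [hfLa, hfLa, map_smul, h0, smul_smul, smul_smul,
        show s2⁻¹ * s2⁻¹ * lam = 1 from by rw [← hs2]; field_simp]
      exact one_smul _ _
    set B : V →ₗ[ℂ] V := ((τ g) ∘ₗ ι ∘ₗ fI ∘ₗ r) + (ι ∘ₗ fL ∘ₗ r ∘ₗ (τ g⁻¹)) with hBdef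
    have hBa : ∀ v, B v = τ g (ι (fI (r v))) + ι (fL (r (τ g⁻¹ v))) := fun v => rfl
    have hBK : ∀ (a : G), a ∈ μ.ker → ∀ (v : V), B (τ a v) = τ a (B v) := by
      intro a ha v
      rw [hBa, hBa, map_add]
      congr 1
      · rw [hrτ a ha, hfIq a ha, hqι _ (conj_mem_ker ha g), rep_mul, rep_mul]
        exact congrArg (fun z => τ z (ι (fI (r v)))) (by group)
      · have h1 : τ g⁻¹ (τ a v) = τ (g⁻¹ * a * g) (τ g⁻¹ v) := by
          rw [rep_mul, rep_mul]
          exact congrArg (fun z => τ z v) (by group)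
        rw [h1, hrτ (g⁻¹*a*g) (conj_mem_ker ha g), hfLq a ha, hqι a ha]
    have hBg : ∀ v, B (τ g v) = τ g (B v) := by
      intro v
      rw [hBa, hBa, map_add]
      have e1 : ι (fL (r (τ g⁻¹ (τ g v)))) = τ g (τ g (ι (fI (r v)))) := by
        rw [rep_mul, inv_mul_cancel, map_one, Module.End.one_apply, rep_mul,
          ← hqι (g*g) hg2 (fI (r v)), ← hfLfL (fI (r v)), hfLfI]
      have e2 : τ g (ι (fI (r (τ g v)))) = τ g (ι (fL (r (τ g⁻¹ v)))) := by
        apply congrArg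
        apply congrArg
        have hinj : ∀ x y, fL x = fL y → x = y := by
          intro x y hxy
          rw [← hfIfL x, ← hfIfL y, hxy]
        apply hinj
        rw [hfLfI, hfLfL, ← hrτ (g*g) hg2, rep_mul]
        exact congrArg r (congrArg (fun z => τ z v) (by group))
      rw [e1, e2, add_comm]
    have hBall : ∀ (x : G) (v : V), B (τ x v) = τ x (B v) := by
      intro x v
      by_cases hx : x ∈ μ.ker
      · exact hBK x hx v
      · have hx2 : g⁻¹ * x ∈ μ.ker := inv_mul_mem_ker hval hg hx
        have h1 : τ x v = τ g (τ (g⁻¹ * x) v) := by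
          rw [rep_mul]
          exact congrArg (fun z => τ z v) (by group)
        rw [h1, hBg, hBK _ hx2, rep_mul]
        exact congrArg (fun z => τ z (B v)) (by group)
    obtain ⟨cB, hcB⟩ := schur hirr B hBall
    have hBι : ∀ w, τ g (ι (fI w)) = cB • ι w := by
      intro w
      have h0 := hcB (ι w)
      rw [hBa, hrι, hrgiι, map_zero, map_zero, add_zero] at h0
      exact h0
    have hcB0 : cB = 0 := by
      obtain ⟨w1, hw1⟩ := exists_ne (0 : Fin n → ℂ)
      have h0 := congrArg r (hBι w1)
      rw [hrgι, map_smul, hrι] at h0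
      by_contra hne
      apply hw1
      rcases smul_eq_zero.mp h0.symm with h | h
      · exact absurd h hne
      · exact h
    obtain ⟨w1, hw1⟩ := exists_ne (0 : Fin n → ℂ)
    have h2 := hBι w1
    rw [hcB0, zero_smul] at h2
    have h3 : ι (fI w1) = 0 := by
      have h4 := congrArg (τ g⁻¹) h2
      rwa [rep_mul, inv_mul_cancel, map_one, Module.End.one_apply, map_zero] at h4
    have h4 : fI w1 = 0 := hιinj _ h3
    apply hw1
    rw [← hfLfI w1, h4, map_zero]
  -- the intertwining isomorphism between IndRep q and τ
  set L : ((Fin n → ℂ) × (Fin n → ℂ)) →ₗ[ℂ] V :=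
    (ι ∘ₗ (LinearMap.fst ℂ (Fin n → ℂ) (Fin n → ℂ)))
      + (((τ g) ∘ₗ ι) ∘ₗ (LinearMap.snd ℂ (Fin n → ℂ) (Fin n → ℂ))) with hLdef
  have hLa : ∀ u, L u = ι u.1 + τ g (ι u.2) := fun u => rfl
  have hLinj : Function.Injective L := by
    rw [injective_iff_map_eq_zero]
    intro u hu
    rw [hLa] at hu
    have h1 := congrArg r hu
    rw [map_add, hrι, hrgι, add_zero, map_zero] at h1
    have h2 : τ g (ι u.2) = 0 := by
      have h5 := hu
      rw [h1, map_zero, zero_add] at h5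
      exact h5
    have h3 : ι u.2 = 0 := by
      have h6 := congrArg (τ g⁻¹) h2
      rwa [rep_mul, inv_mul_cancel, map_one, Module.End.one_apply, map_zero] at h6
    exact Prod.ext h1 (hιinj _ h3)
  have hLsurj : Function.Surjective L := by
    intro v
    refine ⟨(r v, r (τ g⁻¹ (v - P v))), ?_⟩
    rw [hLa]
    have h2P : P v + P v = v + ee v := by
      rw [hPa, ← two_smul ℂ, smul_smul, show (2:ℂ) * 2⁻¹ = 1 from by norm_num, one_smul]
    have hz : ee (v - P v) = -(v - P v) := by
      rw [map_sub, heP]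
      calc ee v - P v = (v + ee v) - v - P v := by abel
      _ = (P v + P v) - v - P v := by rw [← h2P]
      _ = -(v - P v) := by abel
    have hz2 : ee (τ g⁻¹ (v - P v)) = τ g⁻¹ (v - P v) := by
      rw [hegi, hz, map_neg, neg_neg]
    have hz3 : ι (r (τ g⁻¹ (v - P v))) = τ g⁻¹ (v - P v) := by
      rw [hιr]
      exact hPfix _ hz2
    dsimp only
    rw [hz3, hιr, rep_mul, mul_inv_cancel, map_one, Module.End.one_apply]
    abel
  refine ⟨n, q, hqirr, hqniso, ⟨LinearEquiv.ofBijective L ⟨hLinj, hLsurj⟩, ?_⟩⟩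
  intro x u
  show L (IndRep hval hg q x u) = τ x (L u)
  by_cases hx : x ∈ μ.ker
  · rw [IndRep_apply_mem hval hg q hx, hLa, hLa]
    dsimp only
    rw [hqι x hx, hqι _ (conj_mem_ker hx g), map_add]
    congr 1
    rw [rep_mul, rep_mul]
    exact congrArg (fun z => τ z (ι u.2)) (by group)
  · rw [IndRep_apply_not_mem hval hg q hx, hLa, hLa]
    dsimp only
    rw [hqι _ (mul_mem_ker hval hx hg), hqι _ (inv_mul_mem_ker hval hg hx), map_add,
      rep_mul, rep_mul, add_comm]
    congr 1
    exact congrArg (fun z => τ z (ι u.1)) (by group)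

end Clifford


section Res

variable {G : Type*} [Group G] {μ : G →* ℂˣ}
variable {V W : Type*} [AddCommGroup V] [Module ℂ V] [AddCommGroup W] [Module ℂ W]
variable (hval : ∀ x, μ x = 1 ∨ μ x = -1) {g : G} (hg : g ∉ μ.ker)

/-- `ρ x` as a linear equivalence. -/
noncomputable def repUnit {H : Type*} [Group H] (ρ : Representation ℂ H V) (x : H) :
    V ≃ₗ[ℂ] V :=
  LinearEquiv.ofLinear (ρ x) (ρ x⁻¹)
    (by
      ext v
      simp only [LinearMap.coe_comp, Function.comp_apply, LinearMap.id_coe, id_eq]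
      rw [rep_mul, mul_inv_cancel, map_one, Module.End.one_apply])
    (by
      ext v
      simp only [LinearMap.coe_comp, Function.comp_apply, LinearMap.id_coe, id_eq]
      rw [rep_mul, inv_mul_cancel, map_one, Module.End.one_apply])

theorem repUnit_apply {H : Type*} [Group H] (ρ : Representation ℂ H V) (x : H) (v : V) :
    repUnit ρ x v = ρ x v := rfl

theorem res_conj (τ : Representation ℂ G V) :
    RepIso (conjRep g (τ.comp μ.ker.subtype)) (τ.comp μ.ker.subtype) := by
  refine ⟨repUnit τ g, ?_⟩
  intro k v
  rw [conjRep_apply]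
  show τ g (τ (g⁻¹ * ↑k * g) v) = τ ↑k (τ g v)
  rw [rep_mul, rep_mul]
  exact congrArg (fun z => τ z v) (by group)

theorem res_twist (τ : Representation ℂ G V) :
    RepIso ((twistRep μ τ).comp μ.ker.subtype) (τ.comp μ.ker.subtype) := by
  refine ⟨LinearEquiv.refl ℂ V, ?_⟩
  intro k v
  show (twistRep μ τ) ↑k v = τ ↑k v
  rw [twistRep_apply, mu_coe_one k.2, one_smul]

theorem res_congr {τ : Representation ℂ G V} {τ' : Representation ℂ G W}
    (h : RepIso τ τ') : RepIso (τ.comp μ.ker.subtype) (τ'.comp μ.ker.subtype) := by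
  obtain ⟨e, he⟩ := h
  exact ⟨e, fun k v => he ↑k v⟩

include hval hg in
set_option maxHeartbeats 2000000 in
theorem res_irr {V : Type*} [AddCommGroup V] [Module ℂ V] [FiniteDimensional ℂ V]
    (τ : Representation ℂ G V) (hirr : IsIrreducibleRep τ)
    (hn : ¬ RepIso (twistRep μ τ) τ) : IsIrreducibleRep (τ.comp μ.ker.subtype) := by
  haveI : Nontrivial V := hirr.1
  refine ⟨hirr.1, fun W hW => ?_⟩
  by_contra hcon
  push_neg at hcon
  obtain ⟨hWbot, hWtop⟩ := hcon
  have hWinv : ∀ (a : G), a ∈ μ.ker → ∀ v ∈ W, τ a v ∈ W := fun a ha v hv => hW ⟨a, ha⟩ v hv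
  set S : Set ℕ := {m | ∃ W' : Submodule ℂ V,
    (∀ (a : G), a ∈ μ.ker → ∀ v ∈ W', τ a v ∈ W') ∧ W' ≠ ⊥ ∧ W' ≠ ⊤ ∧ finrank ℂ W' = m}
    with hS
  have hSne : S.Nonempty := ⟨finrank ℂ W, W, hWinv, hWbot, hWtop, rfl⟩
  obtain ⟨W', hW'inv, hW'bot, hW'top, hW'rank⟩ := Nat.sInf_mem hSne
  have hmin : ∀ W'' : Submodule ℂ V, (∀ (a : G), a ∈ μ.ker → ∀ v ∈ W'', τ a v ∈ W'') →
      W'' ≠ ⊥ → W'' ≠ ⊤ → finrank ℂ W' ≤ finrank ℂ W'' := by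
    intro W'' h1 h2 h3
    rw [hW'rank]
    exact Nat.sInf_le ⟨W'', h1, h2, h3, rfl⟩
  set U := W' ⊔ W'.map (τ g) with hU
  have hUinv : ∀ (x : G), ∀ v ∈ U, τ x v ∈ U := by
    intro x v hv
    rw [hU, Submodule.mem_sup] at hv
    obtain ⟨a, ha, b, hb, rfl⟩ := hv
    rw [map_add]
    refine add_mem ?_ ?_
    · by_cases hx : x ∈ μ.ker
      · exact Submodule.mem_sup_left (hW'inv x hx a ha)
      · apply Submodule.mem_sup_right
        refine Submodule.mem_map.mpr ⟨τ (g⁻¹ * x) a, hW'inv _ (inv_mul_mem_ker hval hg hx) a ha, ?_⟩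
        rw [rep_mul]
        exact congrArg (fun z => τ z a) (by group)
    · obtain ⟨u, hu, rfl⟩ := Submodule.mem_map.mp hb
      by_cases hx : x ∈ μ.ker
      · apply Submodule.mem_sup_right
        refine Submodule.mem_map.mpr ⟨τ (g⁻¹ * x * g) u, hW'inv _ (conj_mem_ker hx g) u hu, ?_⟩
        rw [rep_mul, rep_mul]
        exact congrArg (fun z => τ z u) (by group)
      · apply Submodule.mem_sup_left
        have h1 : τ x (τ g u) = τ (x * g) u := by rw [rep_mul]
        rw [h1]
        exact hW'inv _ (mul_mem_ker hval hx hg) u hu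
  have hUtop : U = ⊤ := by
    rcases hirr.2 U hUinv with h | h
    · exfalso
      obtain ⟨w0, hw0, hw0ne⟩ := (Submodule.ne_bot_iff W').mp hW'bot
      have hm : w0 ∈ U := Submodule.mem_sup_left hw0
      rw [h, Submodule.mem_bot] at hm
      exact hw0ne hm
    · exact h
  by_cases hD : W' ⊓ W'.map (τ g) = ⊥
  · -- induced case: contradiction with hn
    obtain ⟨w0, hw0, hw0ne⟩ := (Submodule.ne_bot_iff W').mp hW'bot
    set m := finrank ℂ W' with hm
    set bb : W' ≃ₗ[ℂ] (Fin m → ℂ) := (Module.finBasis ℂ W').equivFun with hbb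
    set ι : (Fin m → ℂ) →ₗ[ℂ] V := W'.subtype ∘ₗ (bb.symm : (Fin m → ℂ) →ₗ[ℂ] W') with hι
    have hιa : ∀ w, ι w = ↑(bb.symm w) := fun w => rfl
    have hιmem : ∀ w, ι w ∈ W' := fun w => (bb.symm w).2
    have hιinj : ∀ w, ι w = 0 → w = 0 := by
      intro w h
      have h1 : bb.symm w = 0 := Subtype.ext (by rw [← hιa, h]; rfl)
      have h2 := congrArg bb h1
      rwa [bb.apply_symm_apply, map_zero] at h2
    have hιsurj : ∀ v ∈ W', ∃ w, ι w = v := by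
      intro v hv
      exact ⟨bb ⟨v, hv⟩, by rw [hιa, bb.symm_apply_apply]⟩
    have hres : ∀ (k : μ.ker), ∀ v ∈ W', τ ↑k v ∈ W' := fun k v hv => hW'inv ↑k k.2 v hv
    have hq1 : (fun (k : μ.ker) =>
        (bb : W' →ₗ[ℂ] (Fin m → ℂ)) ∘ₗ ((τ ↑k).restrict (hres k))
          ∘ₗ (bb.symm : (Fin m → ℂ) →ₗ[ℂ] W')) 1 = 1 := by
      refine LinearMap.ext fun w => ?_
      simp only [LinearMap.comp_apply, LinearEquiv.coe_coe]
      have h1 : (τ ↑(1 : μ.ker)).restrict (hres 1) (bb.symm w) = bb.symm w := by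
        apply Subtype.ext
        rw [LinearMap.restrict_coe_apply]
        show τ 1 _ = _
        rw [map_one, Module.End.one_apply]
      rw [h1, bb.apply_symm_apply]
      rfl
    have hqm : ∀ (k k' : μ.ker), (fun (k : μ.ker) =>
        (bb : W' →ₗ[ℂ] (Fin m → ℂ)) ∘ₗ ((τ ↑k).restrict (hres k))
          ∘ₗ (bb.symm : (Fin m → ℂ) →ₗ[ℂ] W')) (k * k')
        = (fun (k : μ.ker) =>
        (bb : W' →ₗ[ℂ] (Fin m → ℂ)) ∘ₗ ((τ ↑k).restrict (hres k))
          ∘ₗ (bb.symm : (Fin m → ℂ) →ₗ[ℂ] W')) k * (fun (k : μ.ker) =>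
        (bb : W' →ₗ[ℂ] (Fin m → ℂ)) ∘ₗ ((τ ↑k).restrict (hres k))
          ∘ₗ (bb.symm : (Fin m → ℂ) →ₗ[ℂ] W')) k' := by
      intro k k'
      refine LinearMap.ext fun w => ?_
      simp only [LinearMap.comp_apply, LinearEquiv.coe_coe, Module.End.mul_apply]
      rw [bb.symm_apply_apply]
      apply congrArg bb
      apply Subtype.ext
      rw [LinearMap.restrict_coe_apply, LinearMap.restrict_coe_apply,
        LinearMap.restrict_coe_apply, rep_mul]
      rfl
    set q : Representation ℂ μ.ker (Fin m → ℂ) := ⟨⟨fun k =>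
        (bb : W' →ₗ[ℂ] (Fin m → ℂ)) ∘ₗ ((τ ↑k).restrict (hres k))
          ∘ₗ (bb.symm : (Fin m → ℂ) →ₗ[ℂ] W'), hq1⟩, hqm⟩ with hqdef
    have hqι : ∀ (a : G) (ha : a ∈ μ.ker) (w : Fin m → ℂ),
        ι (q ⟨a, ha⟩ w) = τ a (ι w) := by
      intro a ha w
      show ↑(bb.symm (bb ((τ ↑(⟨a, ha⟩ : μ.ker)).restrict (hres ⟨a, ha⟩) (bb.symm w))))
        = τ a (ι w)
      rw [bb.symm_apply_apply, LinearMap.restrict_coe_apply]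
      rfl
    set L : ((Fin m → ℂ) × (Fin m → ℂ)) →ₗ[ℂ] V :=
      (ι ∘ₗ (LinearMap.fst ℂ (Fin m → ℂ) (Fin m → ℂ)))
        + (((τ g) ∘ₗ ι) ∘ₗ (LinearMap.snd ℂ (Fin m → ℂ) (Fin m → ℂ))) with hLdef
    have hLa : ∀ u, L u = ι u.1 + τ g (ι u.2) := fun u => rfl
    have hLinj : Function.Injective L := by
      rw [injective_iff_map_eq_zero]
      intro u hu
      rw [hLa] at hu
      have h1 : ι u.1 ∈ W' ⊓ W'.map (τ g) := by
        rw [Submodule.mem_inf]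
        refine ⟨hιmem _, ?_⟩
        have h2 : ι u.1 = -(τ g (ι u.2)) := by
          rw [eq_neg_iff_add_eq_zero]
          exact hu
        rw [h2]
        exact neg_mem (Submodule.mem_map.mpr ⟨ι u.2, hιmem _, rfl⟩)
      rw [hD, Submodule.mem_bot] at h1
      have h2 : τ g (ι u.2) = 0 := by
        have h5 := hu
        rw [h1, zero_add] at h5
        exact h5
      have h3 : ι u.2 = 0 := by
        have h6 := congrArg (τ g⁻¹) h2
        rwa [rep_mul, inv_mul_cancel, map_one, Module.End.one_apply, map_zero] at h6
      exact Prod.ext (hιinj _ h1) (hιinj _ h3)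
    have hLsurj : Function.Surjective L := by
      intro v
      have hv : v ∈ U := by rw [hUtop]; trivial
      rw [hU, Submodule.mem_sup] at hv
      obtain ⟨a, ha, b, hb, hab⟩ := hv
      obtain ⟨u, hu, rfl⟩ := Submodule.mem_map.mp hb
      obtain ⟨wa, hwa⟩ := hιsurj a ha
      obtain ⟨wb, hwb⟩ := hιsurj u hu
      exact ⟨(wa, wb), by rw [hLa]; dsimp only; rw [hwa, hwb]; exact hab⟩
    have hiso2 : RepIso (IndRep hval hg q) τ := by
      refine ⟨LinearEquiv.ofBijective L ⟨hLinj, hLsurj⟩, ?_⟩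
      intro x u
      show L (IndRep hval hg q x u) = τ x (L u)
      by_cases hx : x ∈ μ.ker
      · rw [IndRep_apply_mem hval hg q hx, hLa, hLa]
        dsimp only
        rw [hqι x hx, hqι _ (conj_mem_ker hx g), map_add]
        congr 1
        rw [rep_mul, rep_mul]
        exact congrArg (fun z => τ z (ι u.2)) (by group)
      · rw [IndRep_apply_not_mem hval hg q hx, hLa, hLa]
        dsimp only
        rw [hqι _ (mul_mem_ker hval hx hg), hqι _ (inv_mul_mem_ker hval hg hx), map_add,
          rep_mul, rep_mul, add_comm]
        congr 1
        exact congrArg (fun z => τ z (ι u.1)) (by group)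
    exact hn (repIso_trans (repIso_trans (twist_congr (repIso_symm hiso2))
      (indRep_twist hval hg q)) hiso2)
  · -- g-stable case: contradiction with minimality/properness
    have hDinv : ∀ (a : G), a ∈ μ.ker → ∀ v ∈ W' ⊓ W'.map (τ g),
        τ a v ∈ W' ⊓ W'.map (τ g) := by
      intro a ha v hv
      rw [Submodule.mem_inf] at hv ⊢
      refine ⟨hW'inv a ha v hv.1, ?_⟩
      obtain ⟨u, hu, huv⟩ := Submodule.mem_map.mp hv.2
      refine Submodule.mem_map.mpr ⟨τ (g⁻¹ * a * g) u, hW'inv _ (conj_mem_ker ha g) u hu, ?_⟩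
      rw [rep_mul, ← huv, rep_mul]
      exact congrArg (fun z => τ z u) (by group)
    have hDne : W' ⊓ W'.map (τ g) ≠ ⊤ := by
      intro h
      apply hW'top
      exact top_unique (by rw [← h]; exact inf_le_left)
    have hle : finrank ℂ W' ≤ finrank ℂ ↥(W' ⊓ W'.map (τ g)) := hmin _ hDinv hD hDne
    have heq : W' ⊓ W'.map (τ g) = W' :=
      Submodule.eq_of_le_of_finrank_le inf_le_left hle
    have hle2 : W' ≤ W'.map (τ g) := by
      conv_lhs => rw [← heq]
      exact inf_le_right
    have hfr : finrank ℂ ↥(W'.map (τ g)) = finrank ℂ ↥W' :=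
      LinearEquiv.finrank_map_eq (repUnit τ g) W'
    have heq2 : W' = W'.map (τ g) :=
      Submodule.eq_of_le_of_finrank_le hle2 (le_of_eq hfr)
    have hGinv : ∀ (x : G), ∀ v ∈ W', τ x v ∈ W' := by
      intro x v hv
      by_cases hx : x ∈ μ.ker
      · exact hW'inv x hx v hv
      · have h1 : τ x v = τ g (τ (g⁻¹ * x) v) := by
          rw [rep_mul]
          exact congrArg (fun z => τ z v) (by group)
        rw [h1, heq2]
        exact Submodule.mem_map.mpr ⟨_, hW'inv _ (inv_mul_mem_ker hval hg hx) v hv, rfl⟩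
    rcases hirr.2 W' hGinv with h | h
    · exact hW'bot h
    · exact hW'top h

include hval hg in
theorem res_inj {τ₁ : Representation ℂ G V} {τ₂ : Representation ℂ G W}
    [FiniteDimensional ℂ W]
    (h2irr : IsIrreducibleRep (τ₂.comp μ.ker.subtype))
    (hE : RepIso (τ₁.comp μ.ker.subtype) (τ₂.comp μ.ker.subtype)) :
    RepIso τ₁ τ₂ ∨ RepIso (twistRep μ τ₁) τ₂ := by
  obtain ⟨E, hEk0⟩ := hE
  have hEk : ∀ (a : G), a ∈ μ.ker → ∀ v, E (τ₁ a v) = τ₂ a (E v) :=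
    fun a ha v => hEk0 ⟨a, ha⟩ v
  haveI : Nontrivial W := h2irr.1
  have hconj' : ∀ {a : G}, a ∈ μ.ker → g * a * g⁻¹ ∈ μ.ker := by
    intro a ha
    have h1 := conj_mem_ker ha g⁻¹
    rwa [inv_inv] at h1
  set D : V →ₗ[ℂ] W := (τ₂ g⁻¹) ∘ₗ (E : V →ₗ[ℂ] W) ∘ₗ (τ₁ g) with hDdef
  have hDa : ∀ v, D v = τ₂ g⁻¹ (E (τ₁ g v)) := fun v => rfl
  have hDk : ∀ (a : G), a ∈ μ.ker → ∀ v, D (τ₁ a v) = τ₂ a (D v) := by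
    intro a ha v
    rw [hDa, hDa, rep_mul]
    have h1 : τ₁ (g * a) v = τ₁ (g * a * g⁻¹) (τ₁ g v) := by
      rw [rep_mul]
      exact congrArg (fun z => τ₁ z v) (by group)
    rw [h1, hEk _ (hconj' ha), rep_mul, rep_mul]
    exact congrArg (fun z => τ₂ z (E (τ₁ g v))) (by group)
  have hEsymm : ∀ (a : G), a ∈ μ.ker → ∀ w, E.symm (τ₂ a w) = τ₁ a (E.symm w) := by
    intro a ha w
    apply E.injective
    rw [hEk a ha, E.apply_symm_apply, E.apply_symm_apply]
  obtain ⟨c, hc⟩ := schur h2irr (D ∘ₗ (E.symm : W →ₗ[ℂ] V)) (by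
    intro k w
    simp only [LinearMap.comp_apply, LinearEquiv.coe_coe]
    show D (E.symm (τ₂ ↑k w)) = τ₂ ↑k (D (E.symm w))
    rw [hEsymm ↑k k.2, hDk ↑k k.2])
  simp only [LinearMap.comp_apply, LinearEquiv.coe_coe] at hc
  have hcD : ∀ v, D v = c • E v := by
    intro v
    have h1 := hc (E v)
    rwa [E.symm_apply_apply] at h1
  have hcne : c ≠ 0 := by
    intro h0
    obtain ⟨w1, hw1⟩ := exists_ne (0 : W)
    have h1 := hcD (τ₁ g⁻¹ (E.symm w1))
    rw [h0, zero_smul, hDa, rep_mul, mul_inv_cancel, map_one, Module.End.one_apply,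
      E.apply_symm_apply] at h1
    apply hw1
    have h2 := congrArg (τ₂ g) h1
    rwa [rep_mul, mul_inv_cancel, map_one, Module.End.one_apply, map_zero] at h2
  have hEg : ∀ v, E (τ₁ g v) = c • τ₂ g (E v) := by
    intro v
    have h1 := hcD v
    rw [hDa] at h1
    have h2 := congrArg (τ₂ g) h1
    rw [rep_mul, mul_inv_cancel, map_one, Module.End.one_apply] at h2
    rw [h2, map_smul]
  have hc2 : c * c = 1 := by
    haveI : Nontrivial V := E.toEquiv.nontrivial
    obtain ⟨v1, hv1⟩ := exists_ne (0 : V)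
    have h1 : E (τ₁ (g*g) v1) = τ₂ (g*g) (E v1) := hEk (g*g) (mul_mem_ker hval hg hg) v1
    have h2 : E (τ₁ (g*g) v1) = (c*c) • τ₂ (g*g) (E v1) := by
      rw [← rep_mul, hEg, hEg, map_smul, smul_smul, rep_mul]
    have h3 : ((c*c) - 1) • τ₂ (g*g) (E v1) = 0 := by
      rw [sub_smul, one_smul, ← h2, h1, sub_self]
    rcases smul_eq_zero.mp h3 with h | h
    · exact sub_eq_zero.mp h
    · exfalso
      apply hv1
      have h4 := congrArg (τ₂ (g*g)⁻¹) h
      rw [rep_mul, inv_mul_cancel, map_one, Module.End.one_apply, map_zero] at h4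
      have h5 : E v1 = E 0 := by rw [h4, map_zero]
      exact E.injective h5
  rcases mul_self_eq_one_iff.mp hc2 with h1 | h1
  · left
    refine ⟨E, ?_⟩
    intro x v
    by_cases hx : x ∈ μ.ker
    · exact hEk x hx v
    · have h2 : τ₁ x v = τ₁ g (τ₁ (g⁻¹ * x) v) := by
        rw [rep_mul]
        exact congrArg (fun z => τ₁ z v) (by group)
      rw [h2, hEg, h1, one_smul, hEk _ (inv_mul_mem_ker hval hg hx), rep_mul]
      exact congrArg (fun z => τ₂ z (E v)) (by group)
  · right
    refine ⟨E, ?_⟩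
    intro x v
    rw [twistRep_apply, map_smul]
    by_cases hx : x ∈ μ.ker
    · rw [mu_coe_one hx, one_smul]
      exact hEk x hx v
    · rw [mu_coe_neg hval hx]
      have h2 : τ₁ x v = τ₁ g (τ₁ (g⁻¹ * x) v) := by
        rw [rep_mul]
        exact congrArg (fun z => τ₁ z v) (by group)
      rw [h2, hEg, h1, hEk _ (inv_mul_mem_ker hval hg hx), rep_mul, smul_smul,
        show ((-1 : ℂ)) * (-1) = 1 from by norm_num, one_smul]
      exact congrArg (fun z => τ₂ z (E v)) (by group)

end Res


section Extend

variable {G : Type*} [Group G] {μ : G →* ℂˣ}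
variable (hval : ∀ x, μ x = 1 ∨ μ x = -1) {g : G} (hg : g ∉ μ.ker)

include hval hg in
set_option maxHeartbeats 1000000 in
theorem extend_rep {n : ℕ} (σ : Representation ℂ μ.ker (Fin n → ℂ))
    (hσ : IsIrreducibleRep σ) (hcj : RepIso (conjRep g σ) σ) :
    ∃ τ : Representation ℂ G (Fin n → ℂ), IsIrreducibleRep τ ∧
      ¬ RepIso (twistRep μ τ) τ ∧ RepIso (τ.comp μ.ker.subtype) σ := by
  obtain ⟨f0, hf0⟩ := hcj
  haveI : Nontrivial (Fin n → ℂ) := hσ.1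
  have hf : ∀ (a : G) (ha : a ∈ μ.ker) (w : Fin n → ℂ),
      f0 (σ ⟨g⁻¹ * a * g, conj_mem_ker ha g⟩ w) = σ ⟨a, ha⟩ (f0 w) := by
    intro a ha w
    have h0 := hf0 ⟨a, ha⟩ w
    rwa [conjRep_apply] at h0
  have hg2 : g * g ∈ μ.ker := mul_mem_ker hval hg hg
  obtain ⟨lam, hlam⟩ := schur hσ
    ((f0 : (Fin n → ℂ) →ₗ[ℂ] (Fin n → ℂ)) ∘ₗ (f0 : (Fin n → ℂ) →ₗ[ℂ] (Fin n → ℂ))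
      ∘ₗ (σ ⟨(g*g)⁻¹, inv_mem hg2⟩)) (by
    intro k w
    simp only [LinearMap.comp_apply, LinearEquiv.coe_coe]
    rw [rep_mul]
    rw [show ((⟨(g*g)⁻¹, inv_mem hg2⟩ : μ.ker) * k)
        = (⟨g⁻¹ * (g⁻¹ * ↑k * g) * g, conj_mem_ker (conj_mem_ker k.2 g) g⟩ : μ.ker)
          * ⟨(g*g)⁻¹, inv_mem hg2⟩ from Subtype.ext (by push_cast; group)]
    rw [← rep_mul, hf (g⁻¹ * ↑k * g) (conj_mem_ker k.2 g), hf ↑k k.2])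
  simp only [LinearMap.comp_apply, LinearEquiv.coe_coe] at hlam
  have hlamne : lam ≠ 0 := by
    intro h0
    obtain ⟨w1, hw1⟩ := exists_ne (0 : Fin n → ℂ)
    have h1 := hlam (σ ⟨g*g, hg2⟩ w1)
    rw [h0, zero_smul, rep_mul,
      show ((⟨(g*g)⁻¹, inv_mem hg2⟩ : μ.ker) * ⟨g*g, hg2⟩) = (1 : μ.ker)
        from Subtype.ext (by push_cast; group), map_one, Module.End.one_apply] at h1
    apply hw1
    apply f0.injective
    apply f0.injective
    rw [h1, map_zero, map_zero]
  obtain ⟨s2, hs2⟩ := exists_sqrt lam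
  have hs2ne : s2 ≠ 0 := fun h => hlamne (by rw [← hs2, h, mul_zero])
  set fL : (Fin n → ℂ) →ₗ[ℂ] (Fin n → ℂ) := s2⁻¹ • (f0 : (Fin n → ℂ) →ₗ[ℂ] _) with hfLdef
  have hfLa : ∀ w, fL w = s2⁻¹ • f0 w := fun w => rfl
  have hfLinj : ∀ w, fL w = 0 → w = 0 := by
    intro w h
    rw [hfLa] at h
    rcases smul_eq_zero.mp h with h' | h'
    · exact absurd (inv_eq_zero.mp h') hs2ne
    · apply f0.injective
      rw [h', map_zero]
  have hfLq : ∀ (a : G) (ha : a ∈ μ.ker) (w : Fin n → ℂ),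
      fL (σ ⟨g⁻¹ * a * g, conj_mem_ker ha g⟩ w) = σ ⟨a, ha⟩ (fL w) := by
    intro a ha w
    rw [hfLa, hfLa, hf a ha, map_smul]
  have hfLfL : ∀ w, fL (fL w) = σ ⟨g*g, hg2⟩ w := by
    intro w
    have h0 := hlam (σ ⟨g*g, hg2⟩ w)
    rw [rep_mul,
      show ((⟨(g*g)⁻¹, inv_mem hg2⟩ : μ.ker) * ⟨g*g, hg2⟩) = (1 : μ.ker)
        from Subtype.ext (by push_cast; group), map_one, Module.End.one_apply] at h0
    rw [hfLa, hfLa, map_smul, h0, smul_smul, smul_smul,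
      show s2⁻¹ * s2⁻¹ * lam = 1 from by rw [← hs2]; field_simp]
    exact one_smul _ _
  set τfun : G → Module.End ℂ (Fin n → ℂ) := fun x =>
    if h : x ∈ μ.ker then σ ⟨x, h⟩
    else fL ∘ₗ σ ⟨g⁻¹ * x, inv_mul_mem_ker hval hg h⟩ with hτfun
  have hτpos : ∀ {x : G} (h : x ∈ μ.ker), τfun x = σ ⟨x, h⟩ := by
    intro x h
    simp only [hτfun]
    exact dif_pos h
  have hτneg : ∀ {x : G} (h : x ∉ μ.ker),
      τfun x = fL ∘ₗ σ ⟨g⁻¹ * x, inv_mul_mem_ker hval hg h⟩ := by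
    intro x h
    simp only [hτfun]
    exact dif_neg h
  have hτ1 : τfun 1 = 1 := by
    rw [hτpos (one_mem _)]
    exact map_one σ
  have hτm : ∀ x y : G, τfun (x * y) = τfun x * τfun y := by
    intro x y
    by_cases hx : x ∈ μ.ker <;> by_cases hy : y ∈ μ.ker
    · rw [hτpos (mul_mem hx hy), hτpos hx, hτpos hy]
      refine LinearMap.ext fun w => ?_
      rw [Module.End.mul_apply, q_mul]
    · rw [hτneg (mul_not_mem_left hx hy), hτpos hx, hτneg hy]
      refine LinearMap.ext fun w => ?_
      simp only [Module.End.mul_apply, LinearMap.comp_apply]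
      rw [← hfLq x hx, q_mul]
      exact congrArg fL (q_congr σ (by group) w)
    · rw [hτneg (mul_not_mem_right hx hy), hτneg hx, hτpos hy]
      refine LinearMap.ext fun w => ?_
      simp only [Module.End.mul_apply, LinearMap.comp_apply]
      rw [q_mul]
      exact congrArg fL (q_congr σ (by group) w)
    · rw [hτpos (mul_mem_ker hval hx hy), hτneg hx, hτneg hy]
      refine LinearMap.ext fun w => ?_
      simp only [Module.End.mul_apply, LinearMap.comp_apply]
      rw [← hfLq (g⁻¹ * x) (inv_mul_mem_ker hval hg hx), q_mul, hfLfL, q_mul]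
      exact q_congr σ (by group) w
  set τ : Representation ℂ G (Fin n → ℂ) := ⟨⟨τfun, hτ1⟩, hτm⟩ with hτdef
  have hτa : ∀ (x : G) (v : Fin n → ℂ), τ x v = τfun x v := fun x v => rfl
  have hτk : ∀ (a : G) (ha : a ∈ μ.ker) (v : Fin n → ℂ), τ a v = σ ⟨a, ha⟩ v := by
    intro a ha v
    rw [hτa, hτpos ha]
  have hτirr : IsIrreducibleRep τ := by
    refine ⟨hσ.1, fun p hp => hσ.2 p ?_⟩
    intro k v hv
    have h0 := hp ↑k v hv
    rwa [hτk ↑k k.2, show (⟨(↑k : G), k.2⟩ : μ.ker) = k from Subtype.ext rfl] at h0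
  have hτntw : ¬ RepIso (twistRep μ τ) τ := by
    rintro ⟨e, he⟩
    have heK : ∀ (k : μ.ker) (v : Fin n → ℂ), e (σ k v) = σ k (e v) := by
      intro k v
      have h0 := he ↑k v
      rw [twistRep_apply, mu_coe_one k.2, one_smul, hτk ↑k k.2, hτk ↑k k.2,
        show (⟨(↑k : G), k.2⟩ : μ.ker) = k from Subtype.ext rfl] at h0
      exact h0
    obtain ⟨c, hc⟩ := schur hσ (e : (Fin n → ℂ) →ₗ[ℂ] (Fin n → ℂ)) (by
      intro k v
      simp only [LinearEquiv.coe_coe]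
      exact heK k v)
    simp only [LinearEquiv.coe_coe] at hc
    have hcne : c ≠ 0 := by
      intro h0
      obtain ⟨w1, hw1⟩ := exists_ne (0 : Fin n → ℂ)
      apply hw1
      apply e.injective
      rw [hc, h0, zero_smul, map_zero]
    obtain ⟨w1, hw1⟩ := exists_ne (0 : Fin n → ℂ)
    have h0 := he g w1
    rw [twistRep_apply, mu_coe_neg hval hg, neg_one_smul, map_neg, hc, hc, map_smul] at h0
    -- h0 : -(c • τ g w1) = c • τ g w1
    have h1 : c • τ g w1 = 0 := eq_zero_of_eq_neg (Eq.symm h0)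
    have h2 : τ g w1 = 0 := by
      rcases smul_eq_zero.mp h1 with h | h
      · exact absurd h hcne
      · exact h
    apply hw1
    have h3 := congrArg (τ g⁻¹) h2
    rwa [rep_mul, inv_mul_cancel, map_one, Module.End.one_apply, map_zero] at h3
  refine ⟨τ, hτirr, hτntw, ⟨LinearEquiv.refl ℂ (Fin n → ℂ), ?_⟩⟩
  intro k v
  show τ ↑k v = σ k v
  rw [hτk ↑k k.2, show (⟨(↑k : G), k.2⟩ : μ.ker) = k from Subtype.ext rfl]

end Extend


section Assemble

variable {G : Type*} [Group G] {μ : G →* ℂˣ}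
variable (hval : ∀ x, μ x = 1 ∨ μ x = -1) {g : G} (hg : g ∉ μ.ker)

/-- Transport of a representation along a linear equivalence. -/
noncomputable def transportRep {H V W : Type*} [Group H] [AddCommGroup V] [Module ℂ V]
    [AddCommGroup W] [Module ℂ W] (E : W ≃ₗ[ℂ] V) (ρ : Representation ℂ H V) :
    Representation ℂ H W where
  toFun x := (E.symm : V →ₗ[ℂ] W) ∘ₗ ρ x ∘ₗ (E : W →ₗ[ℂ] V)
  map_one' := by
    refine LinearMap.ext fun w => ?_
    simp only [LinearMap.comp_apply, LinearEquiv.coe_coe]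
    rw [map_one, Module.End.one_apply, E.symm_apply_apply]
    rfl
  map_mul' x y := by
    refine LinearMap.ext fun w => ?_
    simp only [LinearMap.comp_apply, LinearEquiv.coe_coe, Module.End.mul_apply]
    rw [E.apply_symm_apply, rep_mul]

theorem transportRep_iso {H V W : Type*} [Group H] [AddCommGroup V] [Module ℂ V]
    [AddCommGroup W] [Module ℂ W] (E : W ≃ₗ[ℂ] V) (ρ : Representation ℂ H V) :
    RepIso (transportRep E ρ) ρ :=
  ⟨E, fun x v => E.apply_symm_apply _⟩

noncomputable def prodFinEquiv (m : ℕ) :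
    (Fin (m + m) → ℂ) ≃ₗ[ℂ] ((Fin m → ℂ) × (Fin m → ℂ)) :=
  (LinearEquiv.funCongrLeft ℂ ℂ finSumFinEquiv).trans
    (LinearEquiv.sumArrowLequivProdArrow _ _ ℂ ℂ)

noncomputable def IndFin (p : FinRep μ.ker) : FinRep G :=
  ⟨p.1 + p.1, transportRep (prodFinEquiv p.1) (IndRep hval hg p.2)⟩

theorem IndFin_iso (p : FinRep μ.ker) :
    RepIso (IndFin hval hg p).2 (IndRep hval hg p.2) := transportRep_iso _ _

noncomputable def ResFin (p : FinRep G) : FinRep μ.ker := ⟨p.1, p.2.comp μ.ker.subtype⟩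

include hval hg in
theorem indFin_spec (p : FinRep μ.ker) (h1 : IsIrreducibleRep p.2)
    (h2 : ¬ RepIso (conjRep g p.2) p.2) :
    IsIrreducibleRep (IndFin hval hg p).2 ∧
      RepIso (twistRep μ (IndFin hval hg p).2) (IndFin hval hg p).2 := by
  have hio := IndFin_iso hval hg p
  constructor
  · exact repIso_irr (repIso_symm hio) (indRep_irr hval hg h1 h2)
  · exact repIso_trans (repIso_trans (twist_congr hio) (indRep_twist hval hg p.2))
      (repIso_symm hio)

theorem twistTwist_iso (hval : ∀ x, μ x = 1 ∨ μ x = -1) {V : Type*} [AddCommGroup V]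
    [Module ℂ V] (τ : Representation ℂ G V) :
    RepIso (twistRep μ (twistRep μ τ)) τ := by
  refine ⟨LinearEquiv.refl ℂ V, ?_⟩
  intro x v
  show (twistRep μ (twistRep μ τ)) x v = τ x v
  rw [twistRep_apply, twistRep_apply, smul_smul, mu_sq hval, one_smul]

include hval hg in
theorem pairK_eq (p₁ p₂ : FinRep μ.ker)
    (h : RepIso p₁.2 p₂.2 ∨ RepIso p₁.2 (conjRep g p₂.2)) :
    ({Quotient.mk (repSetoid μ.ker) p₁,
      Quotient.mk (repSetoid μ.ker) ⟨p₁.1, conjRep g p₁.2⟩} : Set (Quotient (repSetoid μ.ker)))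
    = {Quotient.mk (repSetoid μ.ker) p₂,
      Quotient.mk (repSetoid μ.ker) ⟨p₂.1, conjRep g p₂.2⟩} := by
  rcases h with h | h
  · have e1 : Quotient.mk (repSetoid μ.ker) p₁ = Quotient.mk (repSetoid μ.ker) p₂ :=
      Quotient.sound h
    have e2 : Quotient.mk (repSetoid μ.ker) (⟨p₁.1, conjRep g p₁.2⟩ : FinRep μ.ker)
        = Quotient.mk (repSetoid μ.ker) (⟨p₂.1, conjRep g p₂.2⟩ : FinRep μ.ker) :=
      Quotient.sound (conj_congr h)
    rw [e1, e2]
  · have e1 : Quotient.mk (repSetoid μ.ker) p₁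
        = Quotient.mk (repSetoid μ.ker) (⟨p₂.1, conjRep g p₂.2⟩ : FinRep μ.ker) :=
      Quotient.sound h
    have e2 : Quotient.mk (repSetoid μ.ker) (⟨p₁.1, conjRep g p₁.2⟩ : FinRep μ.ker)
        = Quotient.mk (repSetoid μ.ker) p₂ :=
      Quotient.sound (repIso_trans (conj_congr h) (conj_conj_iso hval hg p₂.2))
    rw [e1, e2, Set.pair_comm]

include hval in
theorem pairG_eq (p₁ p₂ : FinRep G)
    (h : RepIso p₁.2 p₂.2 ∨ RepIso (twistRep μ p₁.2) p₂.2) :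
    ({Quotient.mk (repSetoid G) p₁,
      Quotient.mk (repSetoid G) ⟨p₁.1, twistRep μ p₁.2⟩} : Set (Quotient (repSetoid G)))
    = {Quotient.mk (repSetoid G) p₂,
      Quotient.mk (repSetoid G) ⟨p₂.1, twistRep μ p₂.2⟩} := by
  rcases h with h | h
  · have e1 : Quotient.mk (repSetoid G) p₁ = Quotient.mk (repSetoid G) p₂ :=
      Quotient.sound h
    have e2 : Quotient.mk (repSetoid G) (⟨p₁.1, twistRep μ p₁.2⟩ : FinRep G)
        = Quotient.mk (repSetoid G) (⟨p₂.1, twistRep μ p₂.2⟩ : FinRep G) :=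
      Quotient.sound (twist_congr h)
    rw [e1, e2]
  · have e1 : Quotient.mk (repSetoid G) (⟨p₁.1, twistRep μ p₁.2⟩ : FinRep G)
        = Quotient.mk (repSetoid G) p₂ :=
      Quotient.sound h
    have e2 : Quotient.mk (repSetoid G) p₁
        = Quotient.mk (repSetoid G) (⟨p₂.1, twistRep μ p₂.2⟩ : FinRep G) :=
      Quotient.sound (repIso_trans (repIso_symm (twistTwist_iso hval p₁.2)) (twist_congr h))
    rw [e1, e2, Set.pair_comm]

theorem quotient_exact' {H : Type*} [Group H] {p q : FinRep H}
    (h : Quotient.mk (repSetoid H) p = Quotient.mk (repSetoid H) q) : RepIso p.2 q.2 :=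
  Quotient.exact h

theorem quotient_sound' {H : Type*} [Group H] {p q : FinRep H}
    (h : RepIso p.2 q.2) : Quotient.mk (repSetoid H) p = Quotient.mk (repSetoid H) q :=
  Quotient.sound h

theorem pair_cases {α : Type*} {a b c d : α} (h : ({a, b} : Set α) = {c, d}) :
    a = c ∨ a = d := by
  have hm : a ∈ ({c, d} : Set α) := by rw [← h]; exact Set.mem_insert _ _
  simpa using hm

end Assemble

end Stmt5

open Stmt5

/-- Let `G` be a finite group, `μ : G → {±1}` surjective with kernel `K`, and `g ∈ G \ K`.
Then (1) the number of isomorphism classes `[τ]` of irreducible representations of `G` with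
`μ⊗τ ≅ τ` equals the number of unordered pairs `{[σ], [g·σ]}` of classes of irreducible
representations of `K` with `g·σ ≇ σ`; and (2) the number of unordered pairs `{[τ], [μ⊗τ]}`
with `μ⊗τ ≇ τ` equals the number of classes `[σ]` with `g·σ ≅ σ`. -/
theorem stmt_5 {G : Type*} [Group G] [Finite G]
    (μ : G →* ℂˣ) (hval : ∀ x, μ x = 1 ∨ μ x = -1) (hsurj : ∃ x, μ x = -1)
    (g : G) (hg : g ∉ μ.ker) :
    (Nat.card {c : Quotient (repSetoid G) //
        ∃ p : FinRep G, Quotient.mk (repSetoid G) p = c ∧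
          IsIrreducibleRep p.2 ∧ RepIso (twistRep μ p.2) p.2} =
      Nat.card {s : Set (Quotient (repSetoid μ.ker)) //
        ∃ p : FinRep μ.ker, IsIrreducibleRep p.2 ∧ ¬ RepIso (conjRep g p.2) p.2 ∧
          s = {Quotient.mk (repSetoid μ.ker) p,
               Quotient.mk (repSetoid μ.ker) ⟨p.1, conjRep g p.2⟩}}) ∧
    (Nat.card {s : Set (Quotient (repSetoid G)) //
        ∃ p : FinRep G, IsIrreducibleRep p.2 ∧ ¬ RepIso (twistRep μ p.2) p.2 ∧
          s = {Quotient.mk (repSetoid G) p,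
               Quotient.mk (repSetoid G) ⟨p.1, twistRep μ p.2⟩}} =
      Nat.card {c : Quotient (repSetoid μ.ker) //
        ∃ p : FinRep μ.ker, Quotient.mk (repSetoid μ.ker) p = c ∧
          IsIrreducibleRep p.2 ∧ RepIso (conjRep g p.2) p.2}) := by
  constructor
  · -- part (1): self-twisted classes of G ↔ pairs of conjugate classes of ker μ
    refine Eq.symm (Nat.card_eq_of_bijective (fun s =>
      ⟨Quotient.mk (repSetoid G) (IndFin hval hg (Exists.choose s.2)),
        IndFin hval hg (Exists.choose s.2), rfl,
        (indFin_spec hval hg _ (Exists.choose_spec s.2).1 (Exists.choose_spec s.2).2.1).1,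
        (indFin_spec hval hg _ (Exists.choose_spec s.2).1 (Exists.choose_spec s.2).2.1).2⟩)
      ⟨?_, ?_⟩)
    · -- injective
      intro s₁ s₂ hF
      have h0 : Quotient.mk (repSetoid G) (IndFin hval hg (Exists.choose s₁.2))
          = Quotient.mk (repSetoid G) (IndFin hval hg (Exists.choose s₂.2)) :=
        congrArg Subtype.val hF
      have h1 : RepIso (IndFin hval hg (Exists.choose s₁.2)).2
          (IndFin hval hg (Exists.choose s₂.2)).2 := quotient_exact' h0
      have h2 : RepIso (IndRep hval hg (Exists.choose s₁.2).2)
          (IndRep hval hg (Exists.choose s₂.2).2) :=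
        repIso_trans (repIso_symm (IndFin_iso hval hg _))
          (repIso_trans h1 (IndFin_iso hval hg _))
      have h3 := ind_inj hval hg
        (indRep_irr hval hg (Exists.choose_spec s₂.2).1 (Exists.choose_spec s₂.2).2.1) h2
      have h4 := pairK_eq hval hg _ _ h3
      apply Subtype.ext
      exact ((Exists.choose_spec s₁.2).2.2).trans
        (h4.trans ((Exists.choose_spec s₂.2).2.2).symm)
    · -- surjective
      rintro ⟨cval, hc⟩
      obtain ⟨nq, q, hq1, hq2, hq3⟩ :=
        clifford_selftwist hval hg (Exists.choose hc).2 (Exists.choose_spec hc).2.1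
          (Exists.choose_spec hc).2.2
      have hBmem : ∃ p' : FinRep μ.ker, IsIrreducibleRep p'.2
          ∧ ¬ RepIso (conjRep g p'.2) p'.2
          ∧ ({Quotient.mk (repSetoid μ.ker) (⟨nq, q⟩ : FinRep μ.ker),
              Quotient.mk (repSetoid μ.ker) ⟨nq, conjRep g q⟩}
              : Set (Quotient (repSetoid μ.ker)))
            = {Quotient.mk (repSetoid μ.ker) p',
              Quotient.mk (repSetoid μ.ker) ⟨p'.1, conjRep g p'.2⟩} :=
        ⟨⟨nq, q⟩, hq1, hq2, rfl⟩
      refine ⟨⟨_, hBmem⟩, ?_⟩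
      apply Subtype.ext
      show Quotient.mk (repSetoid G) (IndFin hval hg (Exists.choose hBmem)) = cval
      have h4 := pair_cases (Exists.choose_spec hBmem).2.2
      have h5 : RepIso (IndRep hval hg (Exists.choose hBmem).2) (IndRep hval hg q) := by
        rcases h4 with h | h
        · exact ind_congr hval hg (repIso_symm (quotient_exact' h))
        · exact repIso_symm (repIso_trans (ind_congr hval hg (quotient_exact' h))
            (ind_conj hval hg (Exists.choose hBmem).2))
      have h7 : RepIso (IndFin hval hg (Exists.choose hBmem)).2 (Exists.choose hc).2 :=
        repIso_trans (IndFin_iso hval hg _) (repIso_trans h5 hq3)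
      exact (quotient_sound' h7).trans (Exists.choose_spec hc).1
  · -- part (2): pairs of twisted classes of G ↔ conjugation-stable classes of ker μ
    refine Nat.card_eq_of_bijective (fun s =>
      ⟨Quotient.mk (repSetoid μ.ker) (ResFin (μ := μ) (Exists.choose s.2)),
        ResFin (μ := μ) (Exists.choose s.2), rfl,
        res_irr hval hg _ (Exists.choose_spec s.2).1 (Exists.choose_spec s.2).2.1,
        res_conj (g := g) (Exists.choose s.2).2⟩) ⟨?_, ?_⟩
    · -- injective
      intro s₁ s₂ hF
      have h0 : Quotient.mk (repSetoid μ.ker) (ResFin (μ := μ) (Exists.choose s₁.2))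
          = Quotient.mk (repSetoid μ.ker) (ResFin (μ := μ) (Exists.choose s₂.2)) :=
        congrArg Subtype.val hF
      have h1 : RepIso ((Exists.choose s₁.2).2.comp μ.ker.subtype)
          ((Exists.choose s₂.2).2.comp μ.ker.subtype) := quotient_exact' h0
      have h3 := res_inj hval hg
        (res_irr hval hg _ (Exists.choose_spec s₂.2).1 (Exists.choose_spec s₂.2).2.1) h1
      have h4 := pairG_eq hval _ _ h3
      apply Subtype.ext
      exact ((Exists.choose_spec s₁.2).2.2).trans
        (h4.trans ((Exists.choose_spec s₂.2).2.2).symm)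
    · -- surjective
      rintro ⟨cval, hc⟩
      obtain ⟨τ, hτ1, hτ2, hτ3⟩ := extend_rep hval hg (Exists.choose hc).2
        (Exists.choose_spec hc).2.1 (Exists.choose_spec hc).2.2
      have hAmem : ∃ p' : FinRep G, IsIrreducibleRep p'.2
          ∧ ¬ RepIso (twistRep μ p'.2) p'.2
          ∧ ({Quotient.mk (repSetoid G) (⟨(Exists.choose hc).1, τ⟩ : FinRep G),
              Quotient.mk (repSetoid G) ⟨(Exists.choose hc).1, twistRep μ τ⟩}
              : Set (Quotient (repSetoid G)))
            = {Quotient.mk (repSetoid G) p',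
              Quotient.mk (repSetoid G) ⟨p'.1, twistRep μ p'.2⟩} :=
        ⟨⟨(Exists.choose hc).1, τ⟩, hτ1, hτ2, rfl⟩
      refine ⟨⟨_, hAmem⟩, ?_⟩
      apply Subtype.ext
      show Quotient.mk (repSetoid μ.ker) (ResFin (μ := μ) (Exists.choose hAmem)) = cval
      have h4 := pair_cases (Exists.choose_spec hAmem).2.2
      have h5 : RepIso ((Exists.choose hAmem).2.comp μ.ker.subtype)
          (τ.comp μ.ker.subtype) := by
        rcases h4 with h | h
        · exact res_congr (repIso_symm (quotient_exact' h))
        · exact repIso_symm (repIso_trans (res_congr (quotient_exact' h))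
            (res_twist (Exists.choose hAmem).2))
      have h7 : RepIso (ResFin (μ := μ) (Exists.choose hAmem)).2 (Exists.choose hc).2 :=
        repIso_trans h5 hτ3
      exact (quotient_sound' h7).trans (Exists.choose_spec hc).1
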